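/- arXiv:1612.06103 — 5 statements merged into one kernel-verified Lean document; each statement's English description precedes it below -/
import Mathlib

section
/- Let λ be a special orthogonal partition of 2n+1. Then: (i) the number m of integers i with mult_λ(i) odd is odd (and all such i are odd); (ii) every interval of λ consists of odd integers; (iii) the intervals of λ form a partition of Jord_bp(λ): they are pairwise disjoint, nonempty, and their union is Jord_bp(λ). -/
open Classical

namespace Wald

/-- `S f k = λ_1 + … + λ_k` (partitions are indexed from 1; index 0 is unused). -/
def S (f : ℕ → ℕ) (k : ℕ) : ℕ := ∑ j ∈ Finset.Icc 1 k, f j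

/-- `f` represents a partition of `N`: nonincreasing on indices `≥ 1`,
finitely many nonzero terms, with total sum `N`. -/
structure IsPartition (f : ℕ → ℕ) (N : ℕ) : Prop where
  mono : ∀ ⦃j k : ℕ⦄, 1 ≤ j → j ≤ k → f k ≤ f j
  fin : ∃ m, ∀ j, m < j → f j = 0
  total : ∀ m, (∀ j, m < j → f j = 0) → S f m = N

/-- multiplicity of `i` as a term of the partition -/
noncomputable def mult (f : ℕ → ℕ) (i : ℕ) : ℕ := Set.ncard {j : ℕ | 1 ≤ j ∧ f j = i}

/-- dominance order: `Dom f g ↔ f ≤ g` -/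
def Dom (f g : ℕ → ℕ) : Prop := ∀ k, S f k ≤ S g k

/-- transposed partition: `(transpose f) j = #{i ≥ 1 : f i ≥ j}` for `j ≥ 1` -/
noncomputable def transpose (f : ℕ → ℕ) : ℕ → ℕ :=
  fun j => Set.ncard {i : ℕ | 1 ≤ i ∧ 1 ≤ j ∧ j ≤ f i}

/-- union of two partitions (all terms listed together in nonincreasing order);
it is characterized by `transpose (unionP f g) = transpose f + transpose g`. -/
noncomputable def unionP (f g : ℕ → ℕ) : ℕ → ℕ :=
  transpose (fun j => transpose f j + transpose g j)

/-- the partition `(1)` -/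
def one1 : ℕ → ℕ := fun j => if j = 1 then 1 else 0

/-- symplectic partition: every odd `i ≥ 1` has even multiplicity -/
def Symp (f : ℕ → ℕ) : Prop := ∀ i, Odd i → Even (mult f i)

/-- orthogonal partition: every even `i ≥ 2` has even multiplicity -/
def Orth (f : ℕ → ℕ) : Prop := ∀ i, Even i → 1 ≤ i → Even (mult f i)

/-- `λ_{2j-1} ≡ λ_{2j} (mod 2)` for all `j ≥ 1` (speciality for symplectic
partitions of `2n` and orthogonal partitions of `2n`). -/
def SpecialPairs (f : ℕ → ℕ) : Prop := ∀ j, 1 ≤ j → f (2*j - 1) % 2 = f (2*j) % 2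

/-- speciality for orthogonal partitions of `2n+1`: `λ_1` odd and
`λ_{2j} ≡ λ_{2j+1} (mod 2)` for all `j ≥ 1`. -/
def SpecialOrthOdd (f : ℕ → ℕ) : Prop :=
  Odd (f 1) ∧ ∀ j, 1 ≤ j → f (2*j) % 2 = f (2*j + 1) % 2

/-- `Jord_bp` for symplectic partitions: even `i ≥ 2` with positive multiplicity -/
def JordbpS (f : ℕ → ℕ) : Set ℕ := {i | Even i ∧ 2 ≤ i ∧ 1 ≤ mult f i}

/-- `Jord_bp` for orthogonal partitions: odd `i ≥ 1` with positive multiplicity -/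
def JordbpO (f : ℕ → ℕ) : Set ℕ := {i | Odd i ∧ 1 ≤ mult f i}

/-- the set `{i_1 > … > i_m}` of terms with odd multiplicity -/
def OddSet (f : ℕ → ℕ) : Set ℕ := {i | Odd (mult f i)}

/-- for special symplectic partitions: `{i_1 > … > i_{m'}}`, with `0` added if `m` is odd -/
def Dsymp (f : ℕ → ℕ) : Set ℕ :=
  {i | Odd (mult f i) ∨ (i = 0 ∧ Odd (OddSet f).ncard)}

/-- `a = i_{2h-1}` and `b = i_{2h}` for some `h`: consecutive elements of `Dsymp f`
with an even number of elements of `Dsymp f` above `a`. -/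
def PairedS (f : ℕ → ℕ) (a b : ℕ) : Prop :=
  b < a ∧ a ∈ Dsymp f ∧ b ∈ Dsymp f ∧ Even ((Dsymp f ∩ Set.Ioi a).ncard) ∧
    Dsymp f ∩ Set.Ioo b a = ∅

/-- intervals of a special symplectic partition of `2n` -/
def IsIntervalS (f : ℕ → ℕ) (Δ : Set ℕ) : Prop :=
  (∃ a b, PairedS f a b ∧ Δ = {i | (i = 0 ∨ 1 ≤ mult f i) ∧ b ≤ i ∧ i ≤ a}) ∨
  (∃ i, Even i ∧ (i = 0 ∨ (2 ≤ i ∧ 1 ≤ mult f i)) ∧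
    (¬ ∃ a b, PairedS f a b ∧ b ≤ i ∧ i ≤ a) ∧ Δ = {i})

/-- `a = i_{2h-1}` and `b = i_{2h}` for some `h` (orthogonal partitions of `2n`) -/
def PairedOE (f : ℕ → ℕ) (a b : ℕ) : Prop :=
  b < a ∧ a ∈ OddSet f ∧ b ∈ OddSet f ∧ Even ((OddSet f ∩ Set.Ioi a).ncard) ∧
    OddSet f ∩ Set.Ioo b a = ∅

/-- intervals of a special orthogonal partition of `2n` -/
def IsIntervalOE (f : ℕ → ℕ) (Δ : Set ℕ) : Prop :=
  (∃ a b, PairedOE f a b ∧ Δ = {i | 1 ≤ mult f i ∧ b ≤ i ∧ i ≤ a}) ∨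
  (∃ i, Odd i ∧ 1 ≤ mult f i ∧ (¬ ∃ a b, PairedOE f a b ∧ b ≤ i ∧ i ≤ a) ∧ Δ = {i})

/-- `a = i_{2h}` and `b = i_{2h+1}` for some `h ≥ 1` (orthogonal partitions of `2n+1`) -/
def PairedOO (f : ℕ → ℕ) (a b : ℕ) : Prop :=
  b < a ∧ a ∈ OddSet f ∧ b ∈ OddSet f ∧ Odd ((OddSet f ∩ Set.Ioi a).ncard) ∧
    OddSet f ∩ Set.Ioo b a = ∅

/-- intervals of a special orthogonal partition of `2n+1` (convention `i_0 = ∞`) -/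
def IsIntervalOO (f : ℕ → ℕ) (Δ : Set ℕ) : Prop :=
  (∃ b, b ∈ OddSet f ∧ OddSet f ∩ Set.Ioi b = ∅ ∧ Δ = {i | 1 ≤ mult f i ∧ b ≤ i}) ∨
  (∃ a b, PairedOO f a b ∧ Δ = {i | 1 ≤ mult f i ∧ b ≤ i ∧ i ≤ a}) ∨
  (∃ i, Odd i ∧ 1 ≤ mult f i ∧
    (¬ ((∃ b, b ∈ OddSet f ∧ OddSet f ∩ Set.Ioi b = ∅ ∧ b ≤ i) ∨
        (∃ a b, PairedOO f a b ∧ b ≤ i ∧ i ≤ a))) ∧ Δ = {i})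

/-- `J(Δ) = {j ≥ 1 : λ_j ∈ Δ}` -/
def Jset (f : ℕ → ℕ) (Δ : Set ℕ) : Set ℕ := {j | 1 ≤ j ∧ f j ∈ Δ}

/-- `ζ(λ)` for a special symplectic partition (`j_max(Δ_min) = ∞`, so the smallest
interval contributes no `-1`: its `J`-set has no greatest element). -/
noncomputable def zetaS (f : ℕ → ℕ) : ℕ → ℤ := fun j =>
  if ∃ Δ, IsIntervalS f Δ ∧ IsLeast (Jset f Δ) j then 1
  else if ∃ Δ, IsIntervalS f Δ ∧ IsGreatest (Jset f Δ) j then -1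
  else 0

/-- `ζ(λ)` for a special orthogonal partition of `2n` -/
noncomputable def zetaOE (f : ℕ → ℕ) : ℕ → ℤ := fun j =>
  if ∃ Δ, IsIntervalOE f Δ ∧ IsLeast (Jset f Δ) j then 1
  else if ∃ Δ, IsIntervalOE f Δ ∧ IsGreatest (Jset f Δ) j then -1
  else 0

/-- `J^+` for `λ1` special symplectic and `λ2` special orthogonal (of `2n2`) -/
def JplusSet (f1 f2 : ℕ → ℕ) : Set ℕ :=
  {j | 1 ≤ j ∧ Even (f1 j) ∧ Odd (f2 j) ∧
    ((∃ Δ, IsIntervalS f1 Δ ∧ IsLeast (Jset f1 Δ) j) ∨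
     (∃ Δ, IsIntervalOE f2 Δ ∧ IsLeast (Jset f2 Δ) j))}

/-- `J^-` -/
def JminusSet (f1 f2 : ℕ → ℕ) : Set ℕ :=
  {j | 1 ≤ j ∧ Even (f1 j) ∧ Odd (f2 j) ∧
    ((∃ Δ, IsIntervalS f1 Δ ∧ IsGreatest (Jset f1 Δ) j) ∨
     (∃ Δ, IsIntervalOE f2 Δ ∧ IsGreatest (Jset f2 Δ) j))}

/-- the sequence `ξ` -/
noncomputable def xi (f1 f2 : ℕ → ℕ) : ℕ → ℤ := fun j =>
  if j ∈ JplusSet f1 f2 then 1 else if j ∈ JminusSet f1 f2 then -1 else 0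

/-- partial sums of an integer-valued sequence indexed from 1 -/
def Sz (f : ℕ → ℤ) (k : ℕ) : ℤ := ∑ j ∈ Finset.Icc 1 k, f j

/-- `g` is the greatest orthogonal partition of `N` which is dominated by the
sequence `t` (used to define the Spaltenstein-type duality `d`). -/
def IsDualOf (g : ℕ → ℕ) (N : ℕ) (t : ℕ → ℕ) : Prop :=
  (IsPartition g N ∧ Orth g ∧ Dom g t) ∧
  ∀ ν, IsPartition ν N → Orth ν → Dom ν t → Dom ν g

/-- `g = d(f)` for `f` a symplectic partition of `2m`: the greatest orthogonal
partition of `2m+1` dominated by `^t(f ∪ (1))`. -/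
def IsSympDual (g : ℕ → ℕ) (m : ℕ) (f : ℕ → ℕ) : Prop :=
  IsDualOf g (2*m+1) (transpose (unionP f one1))

/-- `g = d(f)` for `f` an orthogonal partition of `2m`: the greatest orthogonal
partition of `2m` dominated by `^tf`. -/
def IsOrthDual (g : ℕ → ℕ) (m : ℕ) (f : ℕ → ℕ) : Prop :=
  IsDualOf g (2*m) (transpose f)

section Aux

variable {f : ℕ → ℕ} {M : ℕ}

/-- greatest index whose part exceeds `i` (0 if none) -/
noncomputable def pv (f : ℕ → ℕ) (M i : ℕ) : ℕ := Nat.findGreatest (fun j => i < f j) M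

lemma pv_iff (hM : ∀ j, M < j → f j = 0)
    (hmono : ∀ ⦃j k : ℕ⦄, 1 ≤ j → j ≤ k → f k ≤ f j)
    {i j : ℕ} (hj : 1 ≤ j) : i < f j ↔ j ≤ pv f M i := by
  constructor
  · intro h
    have hjM : j ≤ M := by
      by_contra hc
      push_neg at hc
      rw [hM j hc] at h
      omega
    exact Nat.le_findGreatest hjM h
  · intro h
    have h0 : pv f M i ≠ 0 := by omega
    have hP : i < f (pv f M i) := (Nat.findGreatest_eq_iff.1 rfl).2.1 h0
    exact lt_of_lt_of_le hP (hmono hj h)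

lemma pv_anti (i : ℕ) : pv f M (i+1) ≤ pv f M i :=
  Nat.findGreatest_mono_left (fun _ h => by omega) M

lemma mult_eq (hM : ∀ j, M < j → f j = 0)
    (hmono : ∀ ⦃j k : ℕ⦄, 1 ≤ j → j ≤ k → f k ≤ f j) (i : ℕ) :
    pv f M i = pv f M (i+1) + mult f (i+1) := by
  have hset : {j : ℕ | 1 ≤ j ∧ f j = i + 1} = Set.Ioc (pv f M (i+1)) (pv f M i) := by
    ext j
    simp only [Set.mem_setOf_eq, Set.mem_Ioc]
    constructor
    · rintro ⟨hj1, hjv⟩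
      constructor
      · by_contra hc
        push_neg at hc
        have := (pv_iff hM hmono hj1).2 hc
        omega
      · exact (pv_iff hM hmono hj1).1 (by omega)
    · rintro ⟨hj1, hj2⟩
      have h1 : (1:ℕ) ≤ j := by omega
      have hgt : i < f j := (pv_iff hM hmono h1).2 hj2
      have hle : ¬ (i + 1 < f j) := fun h => by
        have := (pv_iff hM hmono h1).1 h
        omega
      exact ⟨h1, by omega⟩
  have : mult f (i+1) = pv f M i - pv f M (i+1) := by
    rw [mult, hset, ← Finset.coe_Ioc, Set.ncard_coe_finset, Nat.card_Ioc]
  have := pv_anti (f := f) (M := M) i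
  omega

lemma mult_zero (hM : ∀ j, M < j → f j = 0) : mult f 0 = 0 := by
  have hinf : {j : ℕ | 1 ≤ j ∧ f j = 0}.Infinite := by
    apply Set.Infinite.mono (s := Set.Ioi M)
    · intro j hj
      exact ⟨by simp at hj; omega, hM j hj⟩
    · exact Set.Ioi_infinite M
  exact hinf.ncard

lemma attained_of_mult_pos {v : ℕ} (h : 1 ≤ mult f v) : ∃ j, 1 ≤ j ∧ f j = v := by
  have h' : mult f v ≠ 0 := by omega
  exact Set.nonempty_of_ncard_ne_zero h'

lemma oddset_odd (hM : ∀ j, M < j → f j = 0) (horth : Orth f) :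
    ∀ i ∈ OddSet f, Odd i := by
  intro i hi
  by_contra hodd
  have heven : Even i := Nat.not_odd_iff_even.mp hodd
  rcases Nat.eq_zero_or_pos i with h0 | hpos
  · subst h0
    have : mult f 0 = 0 := mult_zero hM
    rw [OddSet, Set.mem_setOf_eq, this] at hi
    simp at hi
  · have := horth i heven hpos
    exact (Nat.not_odd_iff_even.mpr this : ¬ Odd (mult f i)) hi

lemma oddset_finite (hmono : ∀ ⦃j k : ℕ⦄, 1 ≤ j → j ≤ k → f k ≤ f j) :
    (OddSet f).Finite := by
  apply Set.Finite.subset (Set.finite_Iic (f 1))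
  intro v hv
  have hpos : 1 ≤ mult f v := (hv : Odd (mult f v)).pos
  obtain ⟨j, hj1, hjv⟩ := attained_of_mult_pos hpos
  simp only [Set.mem_Iic]
  rw [← hjv]
  exact hmono le_rfl hj1


/-- Key lemma: for an attained even value `v`, the number of parts `> v` is odd. -/
lemma lemB (hM : ∀ j, M < j → f j = 0)
    (hmono : ∀ ⦃j k : ℕ⦄, 1 ≤ j → j ≤ k → f k ≤ f j)
    (horth : Orth f) (hspec : SpecialOrthOdd f) :
    ∀ v, Even v → (∃ j, 1 ≤ j ∧ f j = v) → Odd (pv f M v) := by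
  suffices h : ∀ q v, pv f M v = q → Even v → (∃ j, 1 ≤ j ∧ f j = v) → Odd q by
    intro v hv hatt
    exact h (pv f M v) v rfl hv hatt
  intro q
  induction q using Nat.strong_induction_on with
  | _ q IH =>
  rintro v hq hv ⟨j, hj1, hjv⟩
  by_contra hoddq
  have hqeven : Even q := Nat.not_odd_iff_even.mp hoddq
  have hjq : q < j := by
    have h1 : ¬ (v < f j) := by omega
    have h2 : ¬ (j ≤ pv f M v) := fun h => h1 ((pv_iff hM hmono hj1).2 h)
    omega
  have hfq1 : f (q+1) = v := by
    have hge : f j ≤ f (q+1) := hmono (by omega) (by omega)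
    have hle : ¬ (v < f (q+1)) := fun h => by
      have := (pv_iff hM hmono (show (1:ℕ) ≤ q+1 by omega)).1 h
      omega
    omega
  rcases Nat.eq_zero_or_pos q with hq0 | hqpos
  · subst hq0
    have hf1 : Odd (f 1) := hspec.1
    rw [show (0+1 : ℕ) = 1 from rfl] at hfq1
    rw [hfq1] at hf1
    exact (Nat.not_odd_iff_even.mpr hv) hf1
  · -- q ≥ 1, even so q ≥ 2; q = 2t
    obtain ⟨t, ht⟩ := hqeven
    have ht1 : 1 ≤ t := by omega
    have hpar := hspec.2 t ht1
    have hfq_even : f q % 2 = 0 := by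
      rw [show 2*t = q by omega] at hpar
      rw [hfq1] at hpar
      rw [Nat.even_iff] at hv
      omega
    have hvv'0 : v < f q := (pv_iff hM hmono (i := v) (j := q) (show (1:ℕ) ≤ q by omega)).2 (by omega)
    set v' := f q with hv'def
    have hvv' : v < v' := hvv'0
    have hv'_even : Even v' := Nat.even_iff.mpr hfq_even
    have hp'lt : pv f M v' < q := by
      have h1 : ¬ (v' < f q) := by omega
      have h2 : ¬ (q ≤ pv f M v') := fun h => h1 ((pv_iff hM hmono (by omega)).2 h)
      omega
    have hodd' : Odd (pv f M v') := IH _ hp'lt v' rfl hv'_even ⟨q, by omega, rfl⟩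
    -- pv (v'-1) = pv v' + mult v', mult v' even
    have hv'pos : 1 ≤ v' := by omega
    have hrec : pv f M (v' - 1) = pv f M v' + mult f v' := by
      have h := mult_eq hM hmono (v' - 1)
      rwa [show v' - 1 + 1 = v' by omega] at h
    have hmult_even : Even (mult f v') := horth v' hv'_even hv'pos
    -- pv (v'-1) = q
    have hα : q ≤ pv f M (v'-1) :=
      (pv_iff hM hmono (i := v'-1) (j := q) (show (1:ℕ) ≤ q by omega)).1 (by omega)
    have hβ : pv f M (v'-1) ≤ q := by
      by_contra hc
      push_neg at hc
      have := (pv_iff hM hmono (i := v'-1) (j := q+1) (show (1:ℕ) ≤ q+1 by omega)).2 (by omega)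
      omega
    rw [Nat.even_iff] at hmult_even
    rw [Nat.odd_iff] at hodd'
    omega

/-- Bridge: parity of `|OddSet ∩ (i,∞)|` equals parity of the number of parts `> i`. -/
lemma lemC (hM : ∀ j, M < j → f j = 0)
    (hmono : ∀ ⦃j k : ℕ⦄, 1 ≤ j → j ≤ k → f k ≤ f j) :
    ∀ i, (Odd ((OddSet f ∩ Set.Ioi i).ncard) ↔ Odd (pv f M i)) := by
  suffices h : ∀ k i, f 1 ≤ i + k → (Odd ((OddSet f ∩ Set.Ioi i).ncard) ↔ Odd (pv f M i)) by
    intro i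
    exact h (f 1) i (by omega)
  intro k
  induction k with
  | zero =>
    intro i hi
    have h1 : pv f M i = 0 := by
      apply Nat.findGreatest_eq_zero_iff.mpr
      intro m hm hmM hP
      have : f m ≤ f 1 := hmono le_rfl hm
      omega
    have h2 : OddSet f ∩ Set.Ioi i = ∅ := by
      rw [Set.eq_empty_iff_forall_notMem]
      rintro v ⟨hv, hgt⟩
      obtain ⟨j, hj1, hjv⟩ := attained_of_mult_pos (hv : Odd (mult f v)).pos
      have : f j ≤ f 1 := hmono le_rfl hj1
      simp only [Set.mem_Ioi] at hgt
      omega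
    rw [h1, h2]
    simp
  | succ k IHk =>
    intro i hi
    by_cases hca : f 1 ≤ i + k
    · exact IHk i hca
    have hstep := IHk (i+1) (by omega)
    have hrec := mult_eq hM hmono i
    by_cases hodd : Odd (mult f (i+1))
    · have hset : OddSet f ∩ Set.Ioi i = insert (i+1) (OddSet f ∩ Set.Ioi (i+1)) := by
        ext v
        simp only [Set.mem_inter_iff, Set.mem_Ioi, Set.mem_insert_iff]
        constructor
        · rintro ⟨hv, hgt⟩
          rcases eq_or_lt_of_le (show i + 1 ≤ v by omega) with h | h
          · exact Or.inl h.symm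
          · exact Or.inr ⟨hv, h⟩
        · rintro (rfl | ⟨hv, hgt⟩)
          · exact ⟨hodd, by omega⟩
          · exact ⟨hv, by omega⟩
      have hfin : (OddSet f ∩ Set.Ioi (i+1)).Finite := (oddset_finite hmono).inter_of_left _
      have hni : (i+1) ∉ OddSet f ∩ Set.Ioi (i+1) := by simp
      rw [hset, Set.ncard_insert_of_notMem hni hfin, hrec]
      simp only [Nat.odd_iff] at hstep hodd ⊢
      omega
    · have hset : OddSet f ∩ Set.Ioi i = OddSet f ∩ Set.Ioi (i+1) := by
        ext v
        simp only [Set.mem_inter_iff, Set.mem_Ioi]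
        constructor
        · rintro ⟨hv, hgt⟩
          refine ⟨hv, ?_⟩
          rcases eq_or_lt_of_le (show i + 1 ≤ v by omega) with h | h
          · exact absurd (h ▸ hv) hodd
          · exact h
        · rintro ⟨hv, hgt⟩
          exact ⟨hv, by omega⟩
      have hev : mult f (i+1) % 2 = 0 := Nat.even_iff.mp (Nat.not_odd_iff_even.mp hodd)
      rw [hset, hrec]
      simp only [Nat.odd_iff] at hstep ⊢
      omega

/-- Counting helper: if `a` is the least element of `OddSet` above `c`. -/
lemma helperH (hmono : ∀ ⦃j k : ℕ⦄, 1 ≤ j → j ≤ k → f k ≤ f j)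
    {c a : ℕ} (h1 : c < a) (h2 : a ∈ OddSet f)
    (h3 : OddSet f ∩ Set.Ioo c a = ∅) :
    (OddSet f ∩ Set.Ioi c).ncard = (OddSet f ∩ Set.Ioi a).ncard + 1 := by
  have hset : OddSet f ∩ Set.Ioi c = insert a (OddSet f ∩ Set.Ioi a) := by
    ext v
    simp only [Set.mem_inter_iff, Set.mem_Ioi, Set.mem_insert_iff]
    constructor
    · rintro ⟨hv, hgt⟩
      rcases lt_trichotomy v a with h | h | h
      · exact absurd (show v ∈ OddSet f ∩ Set.Ioo c a from ⟨hv, hgt, h⟩)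
          (by rw [h3]; exact Set.notMem_empty v)
      · exact Or.inl h
      · exact Or.inr ⟨hv, h⟩
    · rintro (rfl | ⟨hv, hgt⟩)
      · exact ⟨h2, h1⟩
      · exact ⟨hv, by omega⟩
  have hfin : (OddSet f ∩ Set.Ioi a).Finite := (oddset_finite hmono).inter_of_left _
  rw [hset, Set.ncard_insert_of_notMem (by simp) hfin]

end Aux

/-- Section 1.4: for a special orthogonal partition of `2n+1`, the number `m` of
terms with odd multiplicity is odd (and those terms are odd), the intervals
consist of odd integers and form a partition of `Jord_bp(λ)`. -/
theorem stmt12 (n : ℕ) (f : ℕ → ℕ)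
    (hpart : IsPartition f (2*n+1)) (horth : Orth f) (hspec : SpecialOrthOdd f) :
    (Odd (OddSet f).ncard ∧ ∀ i ∈ OddSet f, Odd i) ∧
    (∀ Δ, IsIntervalOO f Δ → ∀ i ∈ Δ, Odd i) ∧
    (∀ Δ, IsIntervalOO f Δ → Δ.Nonempty) ∧
    (∀ Δ Δ', IsIntervalOO f Δ → IsIntervalOO f Δ' → Δ ≠ Δ' → Disjoint Δ Δ') ∧
    ⋃₀ {Δ | IsIntervalOO f Δ} = JordbpO f := by
  obtain ⟨M, hM⟩ := hpart.fin
  have hmono := hpart.mono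
  have hOodd : ∀ i ∈ OddSet f, Odd i := oddset_odd hM horth
  have hfin : (OddSet f).Finite := oddset_finite hmono
  have hD : ∀ i, Even i → 1 ≤ mult f i → Odd ((OddSet f ∩ Set.Ioi i).ncard) := by
    intro i hi hm
    exact (lemC hM hmono i).mpr (lemB hM hmono horth hspec i hi (attained_of_mult_pos hm))
  have part1 : Odd (OddSet f).ncard := by
    have h0 : Odd ((OddSet f ∩ Set.Ioi 0).ncard) := by
      apply (lemC hM hmono 0).mpr
      exact lemB hM hmono horth hspec 0 Even.zero ⟨M+1, by omega, hM (M+1) (by omega)⟩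
    have hset : OddSet f ∩ Set.Ioi 0 = OddSet f := by
      ext v
      simp only [Set.mem_inter_iff, Set.mem_Ioi]
      refine ⟨fun h => h.1, fun h => ⟨h, ?_⟩⟩
      rcases Nat.eq_zero_or_pos v with rfl | hv
      · rw [OddSet, Set.mem_setOf_eq, mult_zero hM] at h
        simp at h
      · exact hv
    rwa [hset] at h0
  have part2 : ∀ Δ, IsIntervalOO f Δ → ∀ i ∈ Δ, Odd i := by
    rintro Δ (⟨b, hbO, htop, rfl⟩ | ⟨a, b, ⟨hba, haO, hbO, hcnt, hgap⟩, rfl⟩ |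
      ⟨i0, hi0odd, hi0m, hneg, rfl⟩) i hi
    · simp only [Set.mem_setOf_eq] at hi
      obtain ⟨hm, hbi⟩ := hi
      by_contra hodd
      have heven : Even i := Nat.not_odd_iff_even.mp hodd
      have h1 := hD i heven hm
      have h2 : OddSet f ∩ Set.Ioi i = ∅ := by
        apply Set.eq_empty_of_subset_empty
        rw [← htop]
        exact Set.inter_subset_inter_right _ (Set.Ioi_subset_Ioi hbi)
      rw [h2] at h1
      simp at h1
    · simp only [Set.mem_setOf_eq] at hi
      obtain ⟨hm, hbi, hia⟩ := hi
      by_contra hodd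
      have heven : Even i := Nat.not_odd_iff_even.mp hodd
      have hbodd := hOodd b hbO
      have haodd := hOodd a haO
      have hbi' : b < i :=
        lt_of_le_of_ne hbi (fun h => (Nat.not_odd_iff_even.mpr heven) (h ▸ hbodd))
      have hia' : i < a :=
        lt_of_le_of_ne hia (fun h => (Nat.not_odd_iff_even.mpr (h ▸ heven)) haodd)
      have hgap' : OddSet f ∩ Set.Ioo i a = ∅ := by
        apply Set.eq_empty_of_subset_empty
        rw [← hgap]
        exact Set.inter_subset_inter_right _ (fun x hx => ⟨lt_trans hbi' hx.1, hx.2⟩)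
      have hH := helperH hmono hia' haO hgap'
      have h1 := hD i heven hm
      rw [hH] at h1
      rw [Nat.odd_iff] at h1 hcnt
      omega
    · simp only [Set.mem_singleton_iff] at hi
      subst hi
      exact hi0odd
  have part3 : ∀ Δ, IsIntervalOO f Δ → Δ.Nonempty := by
    rintro Δ (⟨b, hbO, htop, rfl⟩ | ⟨a, b, ⟨hba, haO, hbO, hcnt, hgap⟩, rfl⟩ |
      ⟨i0, hi0odd, hi0m, hneg, rfl⟩)
    · exact ⟨b, (hbO : Odd (mult f b)).pos, le_rfl⟩
    · exact ⟨a, (haO : Odd (mult f a)).pos, le_of_lt hba, le_rfl⟩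
    · exact ⟨i0, rfl⟩
  have keyTT : ∀ a b a' b', PairedOO f a b → PairedOO f a' b' →
      ∀ i, b ≤ i → i ≤ a → b' ≤ i → i ≤ a' → ¬ a < a' := by
    intro a b a' b' h h' i hbi hia hb'i hia' hlt
    obtain ⟨hba, haO, hbO, hcnt, hgap⟩ := h
    obtain ⟨hba', haO', hbO', hcnt', hgap'⟩ := h'
    by_cases hab' : b' < a
    · exact Set.eq_empty_iff_forall_notMem.mp hgap' a ⟨haO, hab', hlt⟩
    · push_neg at hab'
      have heq : a = b' := le_antisymm hab' (le_trans hb'i hia)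
      have hH := helperH hmono hba' haO' hgap'
      rw [← heq] at hH
      rw [Nat.odd_iff] at hcnt hcnt'
      omega
  have part4 : ∀ Δ Δ', IsIntervalOO f Δ → IsIntervalOO f Δ' → Δ ≠ Δ' → Disjoint Δ Δ' := by
    intro Δ Δ' h h' hne
    rw [Set.disjoint_left]
    intro i hiΔ hiΔ'
    rcases h with ⟨b1, hb1O, htop1, rfl⟩ | ⟨a1, b1, hp1, rfl⟩ | ⟨i1, hi1o, hi1m, hneg1, rfl⟩ <;>
      rcases h' with ⟨b2, hb2O, htop2, rfl⟩ | ⟨a2, b2, hp2, rfl⟩ | ⟨i2, hi2o, hi2m, hneg2, rfl⟩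
    · apply hne
      have hbb : b1 = b2 := by
        rcases lt_trichotomy b1 b2 with hlt | heq | hgt
        · exact absurd (Set.eq_empty_iff_forall_notMem.mp htop1 b2 ⟨hb2O, hlt⟩) not_false
        · exact heq
        · exact absurd (Set.eq_empty_iff_forall_notMem.mp htop2 b1 ⟨hb1O, hgt⟩) not_false
      rw [hbb]
    · simp only [Set.mem_setOf_eq] at hiΔ hiΔ'
      obtain ⟨hba2, ha2O, hb2O, hcnt2, hgap2⟩ := hp2
      rcases Nat.lt_or_ge b1 a2 with hlt | hge
      · exact Set.eq_empty_iff_forall_notMem.mp htop1 a2 ⟨ha2O, hlt⟩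
      · have heq : a2 = b1 := by omega
        rw [heq, htop1] at hcnt2
        simp at hcnt2
    · simp only [Set.mem_setOf_eq, Set.mem_singleton_iff] at hiΔ hiΔ'
      subst hiΔ'
      exact hneg2 (Or.inl ⟨b1, hb1O, htop1, hiΔ.2⟩)
    · simp only [Set.mem_setOf_eq] at hiΔ hiΔ'
      obtain ⟨hba1, ha1O, hb1O, hcnt1, hgap1⟩ := hp1
      rcases Nat.lt_or_ge b2 a1 with hlt | hge
      · exact Set.eq_empty_iff_forall_notMem.mp htop2 a1 ⟨ha1O, hlt⟩
      · have heq : a1 = b2 := by omega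
        rw [heq, htop2] at hcnt1
        simp at hcnt1
    · simp only [Set.mem_setOf_eq] at hiΔ hiΔ'
      obtain ⟨hm1, hb1i, hia1⟩ := hiΔ
      obtain ⟨hm2, hb2i, hia2⟩ := hiΔ'
      have haa : a1 = a2 := by
        rcases lt_trichotomy a1 a2 with hlt | heq | hgt
        · exact absurd hlt (keyTT a1 b1 a2 b2 hp1 hp2 i hb1i hia1 hb2i hia2)
        · exact heq
        · exact absurd hgt (keyTT a2 b2 a1 b1 hp2 hp1 i hb2i hia2 hb1i hia1)
      obtain ⟨hba1, ha1O, hb1O, hcnt1, hgap1⟩ := hp1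
      obtain ⟨hba2, ha2O, hb2O, hcnt2, hgap2⟩ := hp2
      have hbb : b1 = b2 := by
        rcases lt_trichotomy b1 b2 with hlt | heq | hgt
        · exact absurd (Set.eq_empty_iff_forall_notMem.mp hgap1 b2
            ⟨hb2O, hlt, haa ▸ hba2⟩) not_false
        · exact heq
        · exact absurd (Set.eq_empty_iff_forall_notMem.mp hgap2 b1
            ⟨hb1O, hgt, haa ▸ hba1⟩) not_false
      exact hne (by rw [haa, hbb])
    · simp only [Set.mem_setOf_eq, Set.mem_singleton_iff] at hiΔ hiΔ'
      subst hiΔ'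
      exact hneg2 (Or.inr ⟨a1, b1, hp1, hiΔ.2.1, hiΔ.2.2⟩)
    · simp only [Set.mem_setOf_eq, Set.mem_singleton_iff] at hiΔ hiΔ'
      subst hiΔ
      exact hneg1 (Or.inl ⟨b2, hb2O, htop2, hiΔ'.2⟩)
    · simp only [Set.mem_setOf_eq, Set.mem_singleton_iff] at hiΔ hiΔ'
      subst hiΔ
      exact hneg1 (Or.inr ⟨a2, b2, hp2, hiΔ'.2.1, hiΔ'.2.2⟩)
    · simp only [Set.mem_singleton_iff] at hiΔ hiΔ'
      exact hne (by rw [← hiΔ, ← hiΔ'])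
  refine ⟨⟨part1, hOodd⟩, part2, part3, part4, ?_⟩
  ext i
  simp only [Set.mem_sUnion, Set.mem_setOf_eq, JordbpO]
  constructor
  · rintro ⟨Δ, hΔ, hiΔ⟩
    refine ⟨part2 Δ hΔ i hiΔ, ?_⟩
    rcases hΔ with ⟨b, hbO, htop, rfl⟩ | ⟨a, b, hp, rfl⟩ | ⟨i0, hi0o, hi0m, hneg, rfl⟩
    · exact hiΔ.1
    · exact hiΔ.1
    · simp only [Set.mem_singleton_iff] at hiΔ
      subst hiΔ
      exact hi0m
  · rintro ⟨hodd, hm⟩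
    by_cases hc1 : ∃ b, b ∈ OddSet f ∧ OddSet f ∩ Set.Ioi b = ∅ ∧ b ≤ i
    · obtain ⟨b, hbO, htop, hbi⟩ := hc1
      exact ⟨{v | 1 ≤ mult f v ∧ b ≤ v}, Or.inl ⟨b, hbO, htop, rfl⟩, hm, hbi⟩
    by_cases hc2 : ∃ a b, PairedOO f a b ∧ b ≤ i ∧ i ≤ a
    · obtain ⟨a, b, hp, hbi, hia⟩ := hc2
      exact ⟨{v | 1 ≤ mult f v ∧ b ≤ v ∧ v ≤ a}, Or.inr (Or.inl ⟨a, b, hp, rfl⟩), hm, hbi, hia⟩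
    · exact ⟨{i}, Or.inr (Or.inr ⟨i, hodd, hm, fun h => h.elim hc1 hc2, rfl⟩), rfl⟩


end Wald
end

section
/- For every integer N ≥ 1 and every partition Λ of N, the set of orthogonal partitions of N that are ≤ Λ in the dominance order is nonempty and possesses a greatest element. -/
open Classical

namespace Wald

lemma S_icc (f : ℕ → ℕ) (k : ℕ) : S f k = ∑ j ∈ Finset.Ioc 0 k, f j := by
  rw [S, ← Finset.Icc_add_one_left_eq_Ioc]; rfl

lemma S_succ (f : ℕ → ℕ) (k : ℕ) : S f (k+1) = S f k + f (k+1) := by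
  rw [S, S, Finset.sum_Icc_succ_top (by omega)]

lemma S_split (f : ℕ → ℕ) {k m : ℕ} (h : k ≤ m) :
    S f m = S f k + ∑ t ∈ Finset.Ioc k m, f t := by
  rw [S_icc, S_icc, ← Finset.sum_Ioc_consecutive f (Nat.zero_le k) h]

lemma S_mono_idx (f : ℕ → ℕ) {k m : ℕ} (h : k ≤ m) : S f k ≤ S f m := by
  rw [S_split f h]; exact Nat.le_add_right _ _

lemma S_stable (f : ℕ → ℕ) {m k : ℕ} (hm : ∀ t, m < t → f t = 0) (h : m ≤ k) :
    S f k = S f m := by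
  rw [S_split f h, Finset.sum_eq_zero, add_zero]
  intro t ht
  exact hm t (Finset.mem_Ioc.mp ht).1

lemma S_le_N {f : ℕ → ℕ} {N : ℕ} (hf : IsPartition f N) (k : ℕ) : S f k ≤ N := by
  obtain ⟨m, hm⟩ := hf.fin
  have h1 : S f m = N := hf.total m hm
  calc S f k ≤ S f (max k m) := S_mono_idx f (le_max_left _ _)
    _ = S f m := S_stable f hm (le_max_right _ _)
    _ = N := h1

lemma part_le {f : ℕ → ℕ} {N : ℕ} (hf : IsPartition f N) {t : ℕ} (h1 : 1 ≤ t)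
    (h : 1 ≤ f t) : t ≤ N := by
  have : t ≤ S f t := by
    calc t = ∑ _j ∈ Finset.Icc 1 t, 1 := by simp
    _ ≤ S f t := Finset.sum_le_sum (fun i hi => by
        have hh := Finset.mem_Icc.mp hi
        exact le_trans h (hf.mono hh.1 hh.2))
  exact le_trans this (S_le_N hf t)

lemma mono_of_adj {f : ℕ → ℕ} (h : ∀ t, 1 ≤ t → f (t+1) ≤ f t) :
    ∀ ⦃j k : ℕ⦄, 1 ≤ j → j ≤ k → f k ≤ f j := by
  intro j k hj hjk
  induction k, hjk using Nat.le_induction with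
  | base => exact le_rfl
  | succ n hn ih => exact le_trans (h n (le_trans hj hn)) ih

lemma mult_nonempty {f : ℕ → ℕ} {v : ℕ} (h : mult f v ≠ 0) :
    ∃ t, 1 ≤ t ∧ f t = v := Set.nonempty_of_ncard_ne_zero h

lemma cast_even {n : ℕ} (h : Even n) : ((n : ZMod 2)) = 0 := by
  rw [ZMod.natCast_eq_zero_iff]; exact even_iff_two_dvd.mp h

lemma cast_odd {n : ℕ} (h : Odd n) : ((n : ZMod 2)) = 1 := by
  rw [← ZMod.natCast_mod, Nat.odd_iff.mp h]; rfl

lemma fiber_eq_mult {ν : ℕ → ℕ} {q v : ℕ} (hv : q ≤ v)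
    (A : Finset ℕ) (hA : ∀ t, t ∈ A ↔ 1 ≤ t ∧ q ≤ ν t) :
    ((A.filter (fun i => ν i = v)).card) = mult ν v := by
  rw [mult, ← Set.ncard_coe_finset]
  congr 1
  ext t
  simp only [Finset.coe_filter, Set.mem_setOf_eq, hA]
  constructor
  · rintro ⟨⟨h1, _⟩, h3⟩; exact ⟨h1, h3⟩
  · rintro ⟨h1, h2⟩; exact ⟨⟨h1, h2 ▸ hv⟩, h2⟩

lemma factV {ν : ℕ → ℕ} {q : ℕ} (ho : Orth ν) (hq2 : 2 ≤ q)
    (A : Finset ℕ) (hA : ∀ t, t ∈ A ↔ 1 ≤ t ∧ q ≤ ν t) :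
    (∑ t ∈ A, ((ν t : ZMod 2) + 1)) = 0 := by
  classical
  rw [← Finset.sum_fiberwise_of_maps_to (fun t ht => Finset.mem_image_of_mem ν ht)
    (fun t => ((ν t : ZMod 2) + 1))]
  have hfib : ∀ v ∈ A.image ν, (∑ t ∈ A.filter (fun i => ν i = v), ((ν t : ZMod 2) + 1))
      = (A.filter (fun i => ν i = v)).card • (((v : ZMod 2)) + 1) := by
    intro v _
    rw [Finset.sum_congr rfl (fun t ht => by rw [(Finset.mem_filter.mp ht).2]),
      Finset.sum_const]
  rw [Finset.sum_congr rfl hfib]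
  apply Finset.sum_eq_zero
  intro v hv
  obtain ⟨t, ht, rfl⟩ := Finset.mem_image.mp hv
  have hq : q ≤ ν t := ((hA t).mp ht).2
  rw [nsmul_eq_mul, fiber_eq_mult hq A hA]
  rcases Nat.even_or_odd (ν t) with he | hodd
  · rw [cast_even (ho (ν t) he (by omega))]; rw [zero_mul]
  · rw [cast_odd hodd, show ((1:ZMod 2)+1) = 0 from by decide, mul_zero]

lemma factM {μ : ℕ → ℕ} {q : ℕ} (hq2 : 2 ≤ q) (hqe : Even q)
    (hqodd : Odd (mult μ q)) (hmax : ∀ v, q < v → Even v → Even (mult μ v))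
    (B : Finset ℕ) (hB : ∀ t, t ∈ B ↔ 1 ≤ t ∧ q ≤ μ t) :
    (∑ t ∈ B, ((μ t : ZMod 2) + 1)) = 1 := by
  classical
  rw [← Finset.sum_fiberwise_of_maps_to (fun t ht => Finset.mem_image_of_mem μ ht)
    (fun t => ((μ t : ZMod 2) + 1))]
  have hfib : ∀ v ∈ B.image μ, (∑ t ∈ B.filter (fun i => μ i = v), ((μ t : ZMod 2) + 1))
      = (B.filter (fun i => μ i = v)).card • (((v : ZMod 2)) + 1) := by
    intro v _
    rw [Finset.sum_congr rfl (fun t ht => by rw [(Finset.mem_filter.mp ht).2]),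
      Finset.sum_const]
  rw [Finset.sum_congr rfl hfib]
  have hqmem : q ∈ B.image μ := by
    obtain ⟨t, ht1, ht2⟩ := mult_nonempty
      (by intro h; rw [h] at hqodd; exact absurd (Nat.odd_iff.mp hqodd) (by decide))
    exact Finset.mem_image.mpr ⟨t, (hB t).mpr ⟨ht1, ht2.ge⟩, ht2⟩
  rw [Finset.sum_eq_single q]
  · rw [nsmul_eq_mul, fiber_eq_mult le_rfl B hB, cast_odd hqodd, cast_even hqe, zero_add, mul_one]
  · intro v hv hne
    obtain ⟨t, ht, rfl⟩ := Finset.mem_image.mp hv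
    have hq : q ≤ μ t := ((hB t).mp ht).2
    rw [nsmul_eq_mul, fiber_eq_mult hq B hB]
    rcases Nat.even_or_odd (μ t) with he | hodd
    · rw [cast_even (hmax (μ t) (lt_of_le_of_ne hq (Ne.symm hne)) he), zero_mul]
    · rw [cast_odd hodd, show ((1:ZMod 2)+1) = 0 from by decide, mul_zero]
  · intro h; exact absurd hqmem h

lemma step {N : ℕ} {μ : ℕ → ℕ} (hμ : IsPartition μ N) (hno : ¬ Orth μ) :
    ∃ μ', IsPartition μ' N ∧ Dom μ' μ ∧ (∃ k₀, 1 ≤ k₀ ∧ k₀ ≤ N ∧ S μ' k₀ < S μ k₀) ∧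
      ∀ ν, IsPartition ν N → Orth ν → Dom ν μ → Dom ν μ' := by
  classical
  obtain ⟨m₀, hm₀⟩ := hμ.fin
  have hex : ∃ i, Even i ∧ 1 ≤ i ∧ ¬ Even (mult μ i) := by
    by_contra h
    push_neg at h
    exact hno (fun i hi h1 => h i hi h1)
  obtain ⟨i0, hi0e, hi01, hi0m⟩ := hex
  have hle_mu1 : ∀ v, mult μ v ≠ 0 → 1 ≤ v → v ≤ μ 1 := by
    intro v hv h1
    obtain ⟨t, ht1, ht2⟩ := mult_nonempty hv
    calc v = μ t := ht2.symm
      _ ≤ μ 1 := hμ.mono le_rfl ht1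
  set F := (Finset.Icc 2 (μ 1)).filter (fun v => Even v ∧ ¬ Even (mult μ v)) with hF
  have hi0F : i0 ∈ F := by
    refine Finset.mem_filter.mpr ⟨Finset.mem_Icc.mpr ⟨?_, ?_⟩, hi0e, hi0m⟩
    · rcases hi0e with ⟨c, hc⟩; omega
    · exact hle_mu1 i0 (fun h => hi0m (h ▸ Even.zero)) hi01
  have hFne : F.Nonempty := ⟨i0, hi0F⟩
  set q := F.max' hFne with hqdef
  obtain ⟨hqIcc, hqe, hqm⟩ := Finset.mem_filter.mp (F.max'_mem hFne)
  have hq2 : 2 ≤ q := (Finset.mem_Icc.mp hqIcc).1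
  have hqodd : Odd (mult μ q) := Nat.not_even_iff_odd.mp hqm
  have hmax : ∀ v, q < v → Even v → Even (mult μ v) := by
    intro v hv hve
    by_contra hc
    have hvF : v ∈ F := Finset.mem_filter.mpr ⟨Finset.mem_Icc.mpr
      ⟨by omega, hle_mu1 v (fun h => hc (h ▸ Even.zero)) (by omega)⟩, hve, hc⟩
    exact absurd (F.le_max' v hvF) (by omega)
  have hqne : mult μ q ≠ 0 := by
    intro h; rw [h] at hqodd; exact absurd (Nat.odd_iff.mp hqodd) (by decide)
  set G := (Finset.Icc 1 m₀).filter (fun t => μ t = q) with hG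
  have hGne : G.Nonempty := by
    obtain ⟨t, ht1, ht2⟩ := mult_nonempty hqne
    refine ⟨t, Finset.mem_filter.mpr ⟨Finset.mem_Icc.mpr ⟨ht1, ?_⟩, ht2⟩⟩
    by_contra hc
    have := hm₀ t (by omega)
    omega
  set j := G.max' hGne with hjdef
  have hjG := G.max'_mem hGne
  have hj1 : 1 ≤ j := (Finset.mem_Icc.mp (Finset.mem_filter.mp hjG).1).1
  have hjq : μ j = q := (Finset.mem_filter.mp hjG).2
  have hjmax : ∀ t, j < t → μ t < q := by
    intro t ht
    have hle : μ t ≤ q := hjq ▸ hμ.mono hj1 (le_of_lt ht)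
    rcases eq_or_lt_of_le hle with he | hlt
    · exfalso
      have htG : t ∈ G := Finset.mem_filter.mpr ⟨Finset.mem_Icc.mpr ⟨by omega, by
          by_contra hc
          have := hm₀ t (by omega)
          omega⟩, he⟩
      exact absurd (G.le_max' t htG) (by omega)
    · exact hlt
  have hlex : ∃ t, j < t ∧ μ t ≤ q - 2 :=
    ⟨max j m₀ + 1, by omega, by rw [hm₀ _ (by omega)]; omega⟩
  set l := Nat.find hlex with hldef
  obtain ⟨hjl, hlle⟩ : j < l ∧ μ l ≤ q - 2 := Nat.find_spec hlex
  have hmid : ∀ t, j < t → t < l → μ t = q - 1 := by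
    intro t h1 h2
    have h3 := Nat.find_min hlex h2
    rw [not_and] at h3
    have h5 := h3 h1
    have h4 := hjmax t h1
    omega
  set μ' : ℕ → ℕ := fun t => if t = j then q - 1 else if t = l then μ l + 1 else μ t with hμ'def
  have hjnel : j ≠ l := by omega
  have hμ'j : μ' j = q - 1 := by simp [hμ'def]
  have hμ'l : μ' l = μ l + 1 := by simp [hμ'def, hjnel.symm]
  have hμ'other : ∀ t, t ≠ j → t ≠ l → μ' t = μ t := by
    intro t h1 h2; simp [hμ'def, h1, h2]
  -- sum comparisons
  have hsum_lo : ∀ k, k < j → S μ' k = S μ k := by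
    intro k hk
    apply Finset.sum_congr rfl
    intro t ht
    have h1 := Finset.mem_Icc.mp ht
    exact hμ'other t (by omega) (by omega)
  have hsum_mid : ∀ k, j ≤ k → k < l → S μ' k + 1 = S μ k := by
    intro k h1 h2
    have hjk : j ∈ Finset.Icc 1 k := Finset.mem_Icc.mpr ⟨hj1, h1⟩
    rw [S, S, ← Finset.sum_erase_add _ _ hjk, ← Finset.sum_erase_add _ μ hjk]
    have he : ∑ t ∈ (Finset.Icc 1 k).erase j, μ' t
        = ∑ t ∈ (Finset.Icc 1 k).erase j, μ t := by
      apply Finset.sum_congr rfl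
      intro t ht
      have h3 := Finset.mem_erase.mp ht
      have h4 := Finset.mem_Icc.mp h3.2
      exact hμ'other t h3.1 (by omega)
    rw [he, hμ'j, hjq]
    omega
  have hsum_hi : ∀ k, l ≤ k → S μ' k = S μ k := by
    intro k hk
    have hlk : l ∈ Finset.Icc 1 k := Finset.mem_Icc.mpr ⟨by omega, hk⟩
    have hjk : j ∈ (Finset.Icc 1 k).erase l :=
      Finset.mem_erase.mpr ⟨hjnel, Finset.mem_Icc.mpr ⟨hj1, by omega⟩⟩
    rw [S, S, ← Finset.sum_erase_add _ _ hlk, ← Finset.sum_erase_add _ μ hlk,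
      ← Finset.sum_erase_add _ _ hjk, ← Finset.sum_erase_add _ μ hjk]
    have he : ∑ t ∈ ((Finset.Icc 1 k).erase l).erase j, μ' t
        = ∑ t ∈ ((Finset.Icc 1 k).erase l).erase j, μ t := by
      apply Finset.sum_congr rfl
      intro t ht
      have h3 := Finset.mem_erase.mp ht
      have h4 := Finset.mem_erase.mp h3.2
      exact hμ'other t h3.1 h4.1
    rw [he, hμ'j, hμ'l, hjq]
    omega
  -- μ' is a partition
  have hmono' : ∀ ⦃a b : ℕ⦄, 1 ≤ a → a ≤ b → μ' b ≤ μ' a := by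
    apply mono_of_adj
    intro t ht
    rcases lt_trichotomy (t+1) j with h1 | h1 | h1
    · rw [hμ'other (t+1) (by omega) (by omega), hμ'other t (by omega) (by omega)]
      exact hμ.mono ht (by omega)
    · rw [h1, hμ'j, hμ'other t (by omega) (by omega)]
      have : μ j ≤ μ t := hμ.mono ht (by omega)
      omega
    · rcases lt_trichotomy (t+1) l with h2 | h2 | h2
      · -- j < t+1 < l
        have hv1 : μ' (t+1) = q - 1 := by
          rw [hμ'other (t+1) (by omega) (by omega)]
          exact hmid (t+1) h1 h2
        have hv2 : q - 1 ≤ μ' t := by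
          rcases eq_or_lt_of_le (show j ≤ t by omega) with hje | hjt
          · rw [← hje, hμ'j]
          · rw [hμ'other t (by omega) (by omega), hmid t hjt (by omega)]
        omega
      · -- t+1 = l
        rw [h2, hμ'l]
        have hv2 : q - 1 ≤ μ' t := by
          rcases eq_or_lt_of_le (show j ≤ t by omega) with hje | hjt
          · rw [← hje, hμ'j]
          · rw [hμ'other t (by omega) (by omega), hmid t hjt (by omega)]
        omega
      · -- t+1 > l
        rw [hμ'other (t+1) (by omega) (by omega)]
        rcases eq_or_lt_of_le (show l ≤ t by omega) with hle' | hlt'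
        · rw [← hle', hμ'l]
          have : μ (l+1) ≤ μ l := hμ.mono (by omega) (by omega)
          omega
        · rw [hμ'other t (by omega) (by omega)]
          exact hμ.mono ht (by omega)
  have hfin' : ∃ m, ∀ t, m < t → μ' t = 0 := by
    refine ⟨max m₀ l, fun t ht => ?_⟩
    rw [hμ'other t (by omega) (by omega)]
    exact hm₀ t (by omega)
  have htot' : ∀ m, (∀ t, m < t → μ' t = 0) → S μ' m = N := by
    intro m hm
    have e1 : S μ' (max m (max m₀ l)) = S μ' m := S_stable μ' hm (le_max_left _ _)
    rw [← e1, hsum_hi _ (by omega), S_stable μ hm₀ (by omega)]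
    exact hμ.total m₀ hm₀
  have hpart' : IsPartition μ' N := ⟨hmono', hfin', htot'⟩
  have hdom' : Dom μ' μ := by
    intro k
    rcases lt_or_ge k j with h | h
    · exact (hsum_lo k h).le
    rcases lt_or_ge k l with h2 | h2
    · have := hsum_mid k h h2; omega
    · exact (hsum_hi k h2).le
  have hjN : j ≤ N := part_le hμ hj1 (by omega)
  refine ⟨μ', hpart', hdom', ⟨j, hj1, hjN, by have := hsum_mid j le_rfl hjl; omega⟩, ?_⟩
  -- maximality
  intro ν hν hνo hνμ k
  rcases lt_or_ge k j with hk | hk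
  · rw [hsum_lo k hk]; exact hνμ k
  rcases lt_or_ge k l with hk2 | hk2
  swap
  · rw [hsum_hi k hk2]; exact hνμ k
  -- j ≤ k < l : need S ν k < S μ k
  have hkey := hsum_mid k hk hk2
  rcases lt_or_eq_of_le (hνμ k) with hlt | heq
  · omega
  exfalso
  -- heq : S ν k = S μ k
  have hk1 : 1 ≤ k := le_trans hj1 hk
  have hμk1 : μ (k+1) ≤ q - 1 := by
    rcases eq_or_lt_of_le (show k + 1 ≤ l by omega) with hkl | hkl
    · rw [hkl]; omega
    · rw [hmid (k+1) (by omega) hkl]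
  have hνk1 : ν (k+1) ≤ q - 1 := by
    have h1 := hνμ (k+1)
    rw [S_succ, S_succ] at h1
    omega
  have hμkge : q - 1 ≤ μ k := by
    rcases eq_or_lt_of_le hk with hje | hjt
    · rw [← hje, hjq]; omega
    · rw [hmid k hjt hk2]
  have hνkge : q - 1 ≤ ν k := by
    obtain ⟨k', rfl⟩ : ∃ k', k = k' + 1 := ⟨k - 1, by omega⟩
    have h1 := hνμ k'
    rw [S_succ, S_succ] at heq
    omega
  set A := (Finset.Icc 1 k).filter (fun t => q ≤ ν t) with hAdef
  set A' := (Finset.Icc 1 k).filter (fun t => ¬ q ≤ ν t) with hA'def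
  set B := (Finset.Icc 1 k).filter (fun t => q ≤ μ t) with hBdef
  set B' := (Finset.Icc 1 k).filter (fun t => ¬ q ≤ μ t) with hB'def
  have hA : ∀ t, t ∈ A ↔ 1 ≤ t ∧ q ≤ ν t := by
    intro t
    simp only [hAdef, Finset.mem_filter, Finset.mem_Icc]
    constructor
    · rintro ⟨⟨u1, _⟩, u3⟩; exact ⟨u1, u3⟩
    · rintro ⟨u1, u3⟩
      refine ⟨⟨u1, ?_⟩, u3⟩
      by_contra hc
      have : ν t ≤ ν (k+1) := hν.mono (by omega) (by omega)
      omega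
  have hB : ∀ t, t ∈ B ↔ 1 ≤ t ∧ q ≤ μ t := by
    intro t
    simp only [hBdef, Finset.mem_filter, Finset.mem_Icc]
    constructor
    · rintro ⟨⟨u1, _⟩, u3⟩; exact ⟨u1, u3⟩
    · rintro ⟨u1, u3⟩
      refine ⟨⟨u1, ?_⟩, u3⟩
      by_contra hc
      have : μ t ≤ μ (k+1) := hμ.mono (by omega) (by omega)
      omega
  have hsplitν : S ν k = ∑ t ∈ A, ν t + A'.card * (q-1) := by
    rw [S, ← Finset.sum_filter_add_sum_filter_not (Finset.Icc 1 k) (fun t => q ≤ ν t) ν]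
    congr 1
    apply Finset.sum_const_nat
    intro t ht
    obtain ⟨htIcc, htq⟩ := Finset.mem_filter.mp ht
    obtain ⟨u1, u2⟩ := Finset.mem_Icc.mp htIcc
    have : ν k ≤ ν t := hν.mono u1 u2
    omega
  have hsplitμ : S μ k = ∑ t ∈ B, μ t + B'.card * (q-1) := by
    rw [S, ← Finset.sum_filter_add_sum_filter_not (Finset.Icc 1 k) (fun t => q ≤ μ t) μ]
    congr 1
    apply Finset.sum_const_nat
    intro t ht
    obtain ⟨htIcc, htq⟩ := Finset.mem_filter.mp ht
    obtain ⟨u1, u2⟩ := Finset.mem_Icc.mp htIcc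
    have : μ k ≤ μ t := hμ.mono u1 u2
    omega
  have hcardA : A.card + A'.card = k := by
    rw [hAdef, hA'def, Finset.card_filter_add_card_filter_not, Nat.card_Icc]
    omega
  have hcardB : B.card + B'.card = k := by
    rw [hBdef, hB'def, Finset.card_filter_add_card_filter_not, Nat.card_Icc]
    omega
  have hV := factV hνo hq2 A hA
  have hM := factM hq2 hqe hqodd hmax B hB
  rw [Finset.sum_add_distrib, Finset.sum_const, nsmul_eq_mul, mul_one] at hV hM
  have hEnat : ∑ t ∈ A, ν t + A'.card * (q-1) = ∑ t ∈ B, μ t + B'.card * (q-1) := by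
    rw [← hsplitν, ← hsplitμ, heq]
  have c1 : ((q - 1 : ℕ) : ZMod 2) = 1 := by
    rw [Nat.cast_sub (by omega), cast_even hqe]
    decide
  have eZ := congrArg (Nat.cast : ℕ → ZMod 2) hEnat
  push_cast at eZ
  rw [c1, mul_one, mul_one] at eZ
  have e3 := congrArg (Nat.cast : ℕ → ZMod 2) hcardA
  have e4 := congrArg (Nat.cast : ℕ → ZMod 2) hcardB
  push_cast at e3 e4
  have htwo : (2 : ZMod 2) = 0 := by decide
  have hfinal : (0 : ZMod 2) = 1 := by
    linear_combination eZ - e3 + e4 - hV + hM + (((A.card : ZMod 2)) - ((B.card : ZMod 2))) * htwo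
  exact absurd hfinal (by decide)

lemma collapse {N : ℕ} : ∀ (n : ℕ) (μ : ℕ → ℕ), IsPartition μ N →
    (∑ k ∈ Finset.Icc 1 N, S μ k) ≤ n →
    ∃ g, (IsPartition g N ∧ Orth g ∧ Dom g μ) ∧
      ∀ ν, IsPartition ν N → Orth ν → Dom ν μ → Dom ν g := by
  intro n
  induction n with
  | zero =>
    intro μ hμ hle
    by_cases ho : Orth μ
    · exact ⟨μ, ⟨hμ, ho, fun k => le_rfl⟩, fun ν _ _ hd => hd⟩
    · exfalso
      obtain ⟨μ', hp', hd', ⟨k₀, hk1, hk2, hk3⟩, _⟩ := step hμ ho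
      have h1 : S μ k₀ ≤ ∑ k ∈ Finset.Icc 1 N, S μ k :=
        Finset.single_le_sum (f := fun k => S μ k) (fun i _ => Nat.zero_le _)
          (Finset.mem_Icc.mpr ⟨hk1, hk2⟩)
      omega
  | succ n ih =>
    intro μ hμ hle
    by_cases ho : Orth μ
    · exact ⟨μ, ⟨hμ, ho, fun k => le_rfl⟩, fun ν _ _ hd => hd⟩
    · obtain ⟨μ', hp', hd', ⟨k₀, hk1, hk2, hk3⟩, hmax⟩ := step hμ ho
      have hlt : (∑ k ∈ Finset.Icc 1 N, S μ' k) < ∑ k ∈ Finset.Icc 1 N, S μ k :=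
        Finset.sum_lt_sum (fun i _ => hd' i) ⟨k₀, Finset.mem_Icc.mpr ⟨hk1, hk2⟩, hk3⟩
      obtain ⟨g, ⟨hg1, hg2, hg3⟩, hgmax⟩ := ih μ' hp' (by omega)
      refine ⟨g, ⟨hg1, hg2, fun k => le_trans (hg3 k) (hd' k)⟩, ?_⟩
      intro ν hν hνo hνd
      exact hgmax ν hν hνo (hmax ν hν hνo hνd)


/-- The set of orthogonal partitions of `N` dominated by a given partition `Λ`
is nonempty and has a greatest element. -/
theorem stmt13 (N : ℕ) (hN : 1 ≤ N) (Λ : ℕ → ℕ) (hΛ : IsPartition Λ N) :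
    (∃ f, IsPartition f N ∧ Orth f ∧ Dom f Λ) ∧
    ∃ g, (IsPartition g N ∧ Orth g ∧ Dom g Λ) ∧
      ∀ f, IsPartition f N → Orth f → Dom f Λ → Dom f g := by
  obtain ⟨g, hg, hgmax⟩ := collapse (∑ k ∈ Finset.Icc 1 N, S Λ k) Λ hΛ le_rfl
  exact ⟨⟨g, hg⟩, g, hg, fun f h1 h2 h3 => hgmax f h1 h2 h3⟩


end Wald
end

section
/- For every symplectic partition λ of 2n, the set of special symplectic partitions λ' of 2n with λ ≤ λ' in the dominance order is nonempty and possesses a least element (denoted sp(λ)). -/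
open Classical

namespace Wald

/-! ## auxiliary development -/

lemma S_zero (f : ℕ → ℕ) : S f 0 = 0 := by simp [S]

lemma S_tail (f : ℕ → ℕ) {m M : ℕ} (h : ∀ j, m < j → f j = 0) (hm : m ≤ M) :
    S f M = S f m := by
  induction M, hm using Nat.le_induction with
  | base => rfl
  | succ M hm ih => rw [S_succ, ih, h (M+1) (by omega), Nat.add_zero]

lemma count_odd (f : ℕ → ℕ) (k : ℕ) :
    S f k % 2 = ((Finset.Icc 1 k).filter (fun i => f i % 2 = 1)).card % 2 := by
  induction k with
  | zero => simp [S_zero]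
  | succ k ih =>
    rw [S_succ, ← Finset.insert_Icc_right_eq_Icc_add_one (by omega), Finset.filter_insert]
    by_cases h : f (k+1) % 2 = 1
    · rw [if_pos h, Finset.card_insert_of_notMem (by simp)]
      omega
    · rw [if_neg h]; omega

/-- Key parity lemma: for a symplectic partition of an even number,
`S f k` is odd only if an odd value straddles position `k`. -/
lemma key {f : ℕ → ℕ} {N : ℕ} (hpart : IsPartition f N) (hN : N % 2 = 0)
    (hsymp : Symp f) (k : ℕ) :
    (f k = f (k+1) ∧ f k % 2 = 1) ∨ S f k % 2 = 0 := by
  by_cases hstr : f k = f (k+1) ∧ f k % 2 = 1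
  · exact Or.inl hstr
  right
  obtain ⟨m, hm⟩ := hpart.fin
  set M := max m k with hM
  have hMz : ∀ j, M < j → f j = 0 := fun j hj => hm j (by omega)
  have hSM : S f M = N := hpart.total M hMz
  -- the finset of indices in (k, M] with odd value
  set D : Finset ℕ := (Finset.Icc (k+1) M).filter (fun i => f i % 2 = 1) with hD
  set A1 : Finset ℕ := (Finset.Icc 1 k).filter (fun i => f i % 2 = 1) with hA1
  set A2 : Finset ℕ := (Finset.Icc 1 M).filter (fun i => f i % 2 = 1) with hA2
  have hunion : A2 = A1 ∪ D := by
    ext i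
    simp only [hA1, hA2, hD, Finset.mem_union, Finset.mem_filter, Finset.mem_Icc]
    constructor
    · rintro ⟨⟨h1, h2⟩, h3⟩
      rcases le_or_gt i k with h | h
      · exact Or.inl ⟨⟨h1, h⟩, h3⟩
      · exact Or.inr ⟨⟨by omega, h2⟩, h3⟩
    · rintro (⟨⟨h1, h2⟩, h3⟩ | ⟨⟨h1, h2⟩, h3⟩)
      · exact ⟨⟨h1, by omega⟩, h3⟩
      · exact ⟨⟨by omega, h2⟩, h3⟩
  have hdisj : Disjoint A1 D := by
    rw [Finset.disjoint_left]
    intro i hi1 hi2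
    simp only [hA1, hD, Finset.mem_filter, Finset.mem_Icc] at hi1 hi2
    omega
  -- D is even: union over odd values of complete occurrence sets
  have hDeven : D.card % 2 = 0 := by
    have hbiU : D = (((Finset.Icc 1 (f (k+1))).filter (fun v => v % 2 = 1)).biUnion
        (fun v => (Finset.Icc (k+1) M).filter (fun i => f i = v))) := by
      ext i
      simp only [hD, Finset.mem_biUnion, Finset.mem_filter, Finset.mem_Icc]
      constructor
      · rintro ⟨⟨h1, h2⟩, h3⟩
        exact ⟨f i, ⟨⟨by omega, hpart.mono (by omega) h1⟩, h3⟩, ⟨h1, h2⟩, rfl⟩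
      · rintro ⟨v, ⟨⟨hv1, hv2⟩, hv3⟩, ⟨h1, h2⟩, h3⟩
        exact ⟨⟨h1, h2⟩, by omega⟩
    rw [hbiU, Finset.card_biUnion]
    · rw [Finset.sum_nat_mod]
      have : ∀ v ∈ (Finset.Icc 1 (f (k+1))).filter (fun v => v % 2 = 1),
          ((Finset.Icc (k+1) M).filter (fun i => f i = v)).card % 2 = 0 := by
        intro v hv
        simp only [Finset.mem_filter, Finset.mem_Icc] at hv
        set u : Finset ℕ := (Finset.Icc (k+1) M).filter (fun i => f i = v) with hu
        rcases Finset.eq_empty_or_nonempty u with he | ⟨i0, hi0⟩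
        · simp [he]
        · -- u equals the full occurrence set, which has even cardinality
          simp only [hu, Finset.mem_filter, Finset.mem_Icc] at hi0
          have hocc : {j : ℕ | 1 ≤ j ∧ f j = v} = ↑u := by
            ext j
            simp only [hu, Finset.coe_filter, Set.mem_setOf_eq, Finset.mem_Icc]
            constructor
            · rintro ⟨hj1, hj2⟩
              have hjM : j ≤ M := by
                by_contra hc
                have := hMz j (by omega)
                omega
              have hjk : k + 1 ≤ j := by
                by_contra hc
                -- j ≤ k, occurrence at i0 ≥ k+1 : straddle
                have h1 : f k ≤ f j := hpart.mono hj1 (by omega)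
                have h2 : f i0 ≤ f (k+1) := hpart.mono (by omega) (by omega)
                have h3 : f (k+1) ≤ f k := hpart.mono (by omega) (by omega)
                exact hstr ⟨by omega, by omega⟩
              exact ⟨⟨hjk, hjM⟩, hj2⟩
            · rintro ⟨⟨hj1, hj2⟩, hj3⟩
              exact ⟨by omega, hj3⟩
          have := hsymp v (Nat.odd_iff.mpr hv.2)
          rw [mult, hocc, Set.ncard_coe_finset, Nat.even_iff] at this
          exact this
      rw [Finset.sum_congr rfl this]
      simp
    · intro u hu v hv huv
      simp only [Finset.disjoint_left, Finset.mem_filter, Finset.mem_Icc]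
      rintro i ⟨h1, h2⟩ ⟨h3, h4⟩
      exact huv (by omega)
  have hA2card : A2.card % 2 = 0 := by
    have h2 := count_odd f M
    rw [hSM, ← hA2] at h2
    omega
  have hcards : A2.card = A1.card + D.card := by
    rw [hunion, Finset.card_union_of_disjoint hdisj]
  have hck := count_odd f k
  rw [← hA1] at hck
  omega


/-- even-rounded partial sums at even positions -/
def eaux (f : ℕ → ℕ) (j : ℕ) : ℕ := S f (2*j) + S f (2*j) % 2

/-- partial sums of `sp f` at odd positions -/
def Oaux (f : ℕ → ℕ) (j : ℕ) : ℕ :=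
  max (S f (2*j+1)) ((eaux f j + eaux f (j+1)) / 2)

/-- the special expansion `sp f` -/
def gaux (f : ℕ → ℕ) : ℕ → ℕ := fun k =>
  if k = 0 then 0
  else if k % 2 = 1 then Oaux f ((k-1)/2) - eaux f ((k-1)/2)
  else eaux f (k/2) - Oaux f (k/2 - 1)

lemma gaux_odd (f : ℕ → ℕ) (j : ℕ) : gaux f (2*j+1) = Oaux f j - eaux f j := by
  have h0 : ¬ (2*j+1 = 0) := by omega
  have h1 : (2*j+1) % 2 = 1 := by omega
  have h2 : (2*j+1-1)/2 = j := by omega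
  simp [gaux, h0, h1, h2]

lemma gaux_even (f : ℕ → ℕ) (j : ℕ) : gaux f (2*j+2) = eaux f (j+1) - Oaux f j := by
  have h0 : ¬ (2*j+2 = 0) := by omega
  have h1 : ¬ ((2*j+2) % 2 = 1) := by omega
  have h2 : (2*j+2)/2 = j+1 := by omega
  simp [gaux, h0, h1, h2]

section Main
variable {n : ℕ} {f : ℕ → ℕ} (hpart : IsPartition f (2*n)) (hsymp : Symp f)

/-- expanded S relations for a window -/
lemma S_window (j : ℕ) :
    S f (2*j+1) = S f (2*j) + f (2*j+1) ∧
    S f (2*(j+1)) = S f (2*j) + f (2*j+1) + f (2*j+2) := by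
  have e1 := S_succ f (2*j)
  have e2 := S_succ f (2*j+1)
  have h : 2*(j+1) = 2*j+1+1 := by ring
  rw [h, e2, e1]
  exact ⟨rfl, rfl⟩

include hpart

lemma eaux_zero : eaux f 0 = 0 := by simp [eaux, S_zero]

lemma eaux_mono (j : ℕ) : eaux f j ≤ eaux f (j+1) := by
  obtain ⟨e1, e2⟩ := S_window (f := f) j
  simp only [eaux]
  omega

lemma S_le_eaux (j : ℕ) : S f (2*j) ≤ eaux f j := by simp [eaux]

lemma eaux_le_Oaux (j : ℕ) : eaux f j ≤ Oaux f j := by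
  have h := eaux_mono hpart j
  have : eaux f j % 2 = 0 := by simp [eaux]; omega
  have : (eaux f j + eaux f (j+1))/2 ≤ Oaux f j := le_max_right _ _
  omega

lemma Oaux_le_eaux (j : ℕ) : Oaux f j ≤ eaux f (j+1) := by
  obtain ⟨e1, e2⟩ := S_window (f := f) j
  have h2 : f (2*j+2) ≤ f (2*j+1) := hpart.mono (by omega) (by omega)
  simp only [Oaux, eaux, max_le_iff]
  omega

set_option maxHeartbeats 2000000 in
include hsymp in
/-- main concavity inequality -/
lemma Oaux_concave (j : ℕ) : Oaux f j + Oaux f (j+1) ≤ 2 * eaux f (j+1) := by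
  have e1 : S f (2*j+1) = S f (2*j) + f (2*j+1) := S_succ f (2*j)
  have e2 : S f (2*j+2) = S f (2*j+1) + f (2*j+2) := S_succ f (2*j+1)
  have e3 : S f (2*j+3) = S f (2*j+2) + f (2*j+3) := S_succ f (2*j+2)
  have e4 : S f (2*j+4) = S f (2*j+3) + f (2*j+4) := S_succ f (2*j+3)
  have m1 : f (2*j+2) ≤ f (2*j+1) := hpart.mono (by omega) (by omega)
  have m2 : f (2*j+3) ≤ f (2*j+2) := hpart.mono (by omega) (by omega)
  have m3 : f (2*j+4) ≤ f (2*j+3) := hpart.mono (by omega) (by omega)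
  have m4 : f (2*j+5) ≤ f (2*j+4) := hpart.mono (by omega) (by omega)
  have k1 : (f (2*j) = f (2*j+1) ∧ f (2*j) % 2 = 1) ∨ S f (2*j) % 2 = 0 :=
    key hpart (by omega) hsymp (2*j)
  have k2 : (f (2*j+1) = f (2*j+2) ∧ f (2*j+1) % 2 = 1) ∨ S f (2*j+1) % 2 = 0 :=
    key hpart (by omega) hsymp (2*j+1)
  have k3 : (f (2*j+4) = f (2*j+5) ∧ f (2*j+4) % 2 = 1) ∨ S f (2*j+4) % 2 = 0 :=
    key hpart (by omega) hsymp (2*j+4)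
  have b1 : S f (2*(j+1)+1) = S f (2*j+3) := rfl
  have b2 : eaux f (j+1) = S f (2*j+2) + S f (2*j+2) % 2 := rfl
  have b3 : eaux f (j+1+1) = S f (2*j+4) + S f (2*j+4) % 2 := rfl
  have b4 : eaux f j = S f (2*j) + S f (2*j) % 2 := rfl
  simp only [Oaux]
  rcases max_cases (S f (2*j+1)) ((eaux f j + eaux f (j+1))/2) with
    ⟨h5, h6⟩ | ⟨h5, h6⟩ <;>
  rcases max_cases (S f (2*(j+1)+1)) ((eaux f (j+1) + eaux f (j+1+1))/2) with
    ⟨h7, h8⟩ | ⟨h7, h8⟩ <;>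
  rw [h5, h7] <;>
  simp only [b1, b2, b3, b4] at h5 h6 h7 h8 ⊢ <;>
  rcases k1 with ⟨k1a, k1b⟩ | k1 <;>
  rcases k2 with ⟨k2a, k2b⟩ | k2 <;>
  rcases k3 with ⟨k3a, k3b⟩ | k3 <;>
  omega

lemma eaux_mod (j : ℕ) : eaux f j % 2 = 0 := by
  unfold eaux; omega

lemma Sg (j : ℕ) : S (gaux f) (2*j) = eaux f j ∧ S (gaux f) (2*j+1) = Oaux f j := by
  induction j with
  | zero =>
    have h1 : S (gaux f) 1 = S (gaux f) 0 + gaux f 1 := S_succ _ 0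
    have h2 : gaux f 1 = Oaux f 0 - eaux f 0 := gaux_odd f 0
    have h3 := eaux_le_Oaux hpart 0
    have h4 : eaux f 0 = 0 := eaux_zero hpart
    have h5 : S (gaux f) 0 = 0 := S_zero _
    constructor
    · show S (gaux f) 0 = eaux f 0; omega
    · show S (gaux f) 1 = Oaux f 0; omega
  | succ j ih =>
    obtain ⟨ih1, ih2⟩ := ih
    have h1 : S (gaux f) (2*j+2) = S (gaux f) (2*j+1) + gaux f (2*j+2) := S_succ _ (2*j+1)
    have h2 : S (gaux f) (2*j+3) = S (gaux f) (2*j+2) + gaux f (2*j+3) := S_succ _ (2*j+2)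
    have h3 := gaux_even f j
    have h4 : gaux f (2*j+3) = Oaux f (j+1) - eaux f (j+1) := gaux_odd f (j+1)
    have h5 := Oaux_le_eaux hpart j
    have h6 := eaux_le_Oaux hpart (j+1)
    constructor
    · show S (gaux f) (2*j+2) = eaux f (j+1); omega
    · show S (gaux f) (2*j+3) = Oaux f (j+1); omega

include hsymp in
lemma gaux_adj (k : ℕ) (hk : 1 ≤ k) : gaux f (k+1) ≤ gaux f k := by
  have hrep : (∃ i, k = 2*i+1) ∨ (∃ i, k = 2*i+2) := by
    rcases Nat.even_or_odd k with ⟨i, hi⟩ | ⟨i, hi⟩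
    · exact Or.inr ⟨i-1, by omega⟩
    · exact Or.inl ⟨i, by omega⟩
  rcases hrep with ⟨i, rfl⟩ | ⟨i, rfl⟩
  · have h1 : gaux f (2*i+2) = eaux f (i+1) - Oaux f i := gaux_even f i
    have h2 := gaux_odd f i
    have hchord : (eaux f i + eaux f (i+1))/2 ≤ Oaux f i := le_max_right _ _
    have h3 := eaux_le_Oaux hpart i
    have h4 := Oaux_le_eaux hpart i
    have h5 := eaux_mod hpart i
    have h6 := eaux_mod hpart (i+1)
    rw [h1, h2]
    omega
  · have h1 : gaux f (2*i+3) = Oaux f (i+1) - eaux f (i+1) := gaux_odd f (i+1)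
    have h2 := gaux_even f i
    have h3 := Oaux_concave hpart hsymp i
    have h4 := eaux_le_Oaux hpart (i+1)
    have h5 := Oaux_le_eaux hpart i
    show gaux f (2*i+3) ≤ gaux f (2*i+2)
    rw [h1, h2]
    omega

include hsymp in
lemma gaux_mono : ∀ ⦃j k : ℕ⦄, 1 ≤ j → j ≤ k → gaux f k ≤ gaux f j := by
  intro j k h1 h2
  induction k, h2 using Nat.le_induction with
  | base => exact le_refl _
  | succ k hk ih => exact le_trans (gaux_adj hpart hsymp k (by omega)) ih

include hsymp in
lemma gaux_part : IsPartition (gaux f) (2*n) := by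
  obtain ⟨m, hm⟩ := hpart.fin
  have hconst : ∀ k, m ≤ k → S f k = 2*n := by
    intro k hk
    rw [S_tail f hm hk]
    exact hpart.total m hm
  have heconst : ∀ j, m ≤ 2*j → eaux f j = 2*n := by
    intro j hj
    unfold eaux
    rw [hconst _ hj]
    omega
  have hOconst : ∀ j, m ≤ 2*j → Oaux f j = 2*n := by
    intro j hj
    unfold Oaux
    rw [hconst _ (by omega), heconst _ hj, heconst _ (by omega)]
    have h : (2*n + 2*n)/2 = 2*n := by omega
    rw [h, max_self]
  have hgz : ∀ k, 2*m+2 < k → gaux f k = 0 := by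
    intro k hk
    have hrep : (∃ i, k = 2*i+1 ∧ m ≤ 2*i) ∨ (∃ i, k = 2*i+2 ∧ m ≤ 2*i) := by
      rcases Nat.even_or_odd k with ⟨i, hi⟩ | ⟨i, hi⟩
      · exact Or.inr ⟨i-1, by omega, by omega⟩
      · exact Or.inl ⟨i, by omega, by omega⟩
    rcases hrep with ⟨i, rfl, hi⟩ | ⟨i, rfl, hi⟩
    · rw [gaux_odd f i, hOconst i hi, heconst i hi]
      omega
    · rw [gaux_even f i, hOconst i hi, heconst (i+1) (by omega)]
      omega
  refine ⟨gaux_mono hpart hsymp, ⟨2*m+2, hgz⟩, ?_⟩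
  intro m' hm'
  have h1 : S (gaux f) (2*(m'+m+2)) = S (gaux f) m' :=
    S_tail (gaux f) hm' (by omega)
  have h2 := (Sg hpart (m'+m+2)).1
  have h3 := heconst (m'+m+2) (by omega)
  omega

include hsymp in
lemma Opar (j : ℕ) : Oaux f j % 2 = 0 ∨ gaux f (2*j+1) = gaux f (2*j+2) := by
  have e1 : S f (2*j+1) = S f (2*j) + f (2*j+1) := S_succ f (2*j)
  have e2 : S f (2*j+2) = S f (2*j+1) + f (2*j+2) := S_succ f (2*j+1)
  have b2 : eaux f (j+1) = S f (2*j+2) + S f (2*j+2) % 2 := rfl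
  have b4 : eaux f j = S f (2*j) + S f (2*j) % 2 := rfl
  have k2 : (f (2*j+1) = f (2*j+2) ∧ f (2*j+1) % 2 = 1) ∨ S f (2*j+1) % 2 = 0 :=
    key hpart (by omega) hsymp (2*j+1)
  have hO : Oaux f j = max (S f (2*j+1)) ((eaux f j + eaux f (j+1))/2) := rfl
  have hg1 := gaux_odd f j
  have hg2 := gaux_even f j
  have h3 := eaux_le_Oaux hpart j
  have h4 := Oaux_le_eaux hpart j
  rw [hg1, hg2, hO]
  rw [hO] at h3 h4
  rcases max_cases (S f (2*j+1)) ((eaux f j + eaux f (j+1))/2) with ⟨h5, h6⟩ | ⟨h5, h6⟩ <;>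
  rw [h5] at * <;>
  rcases k2 with ⟨k2a, k2b⟩ | k2 <;>
  omega

include hsymp in
lemma gaux_pairs_eq : ∀ k, S (gaux f) k % 2 = 0 ∨ gaux f k = gaux f (k+1) := by
  intro k
  rcases Nat.even_or_odd k with ⟨j, hj⟩ | ⟨j, hj⟩
  · left
    have h1 : S (gaux f) (2*j) = eaux f j := (Sg hpart j).1
    have h2 := eaux_mod hpart j
    have hk : k = 2*j := by omega
    rw [hk, h1]
    exact h2
  · have hk : k = 2*j+1 := by omega
    subst hk
    rcases Opar hpart hsymp j with h | h
    · left
      rw [(Sg hpart j).2]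
      exact h
    · right
      exact h

omit hpart in
/-- a partition in which every odd partial sum break is even is symplectic -/
lemma symp_of_pairs {g : ℕ → ℕ} {N : ℕ} (hg : IsPartition g N)
    (hpar : ∀ k, S g k % 2 = 0 ∨ g k = g (k+1)) : Symp g := by
  intro v hv
  have hv1 : 1 ≤ v := hv.pos
  obtain ⟨M, hM⟩ := hg.fin
  set T : Finset ℕ := (Finset.Icc 1 M).filter (fun j => g j = v) with hT
  have hset : {j : ℕ | 1 ≤ j ∧ g j = v} = ↑T := by
    ext j
    simp only [hT, Finset.coe_filter, Set.mem_setOf_eq, Finset.mem_Icc]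
    constructor
    · rintro ⟨h1, h2⟩
      refine ⟨⟨h1, ?_⟩, h2⟩
      by_contra hc
      have := hM j (by omega)
      omega
    · rintro ⟨⟨h1, h2⟩, h3⟩
      exact ⟨h1, h3⟩
  have hmult : mult g v = T.card := by rw [mult, hset, Set.ncard_coe_finset]
  rcases Finset.eq_empty_or_nonempty T with he | hne
  · rw [hmult, he]
    simp
  have h1a : 1 ≤ T.min' hne := by
    have := T.min'_mem hne
    simp only [hT, Finset.mem_filter, Finset.mem_Icc] at this
    exact this.1.1
  set a := T.min' hne with ha
  set b := T.max' hne with hb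
  have hga : g a = v := by
    have := T.min'_mem hne
    simp only [hT, Finset.mem_filter] at this
    exact this.2
  have hgb : g b = v := by
    have := T.max'_mem hne
    simp only [hT, Finset.mem_filter] at this
    exact this.2
  have hbM : b ≤ M := by
    have := T.max'_mem hne
    simp only [hT, Finset.mem_filter, Finset.mem_Icc] at this
    exact this.1.2
  have hab : a ≤ b := T.min'_le b (T.max'_mem hne)
  have hTIcc : T = Finset.Icc a b := by
    ext i
    simp only [Finset.mem_Icc]
    constructor
    · intro hi
      exact ⟨T.min'_le i hi, T.le_max' i hi⟩
    · rintro ⟨h1, h2⟩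
      have hgi1 : g i ≤ v := by rw [← hga]; exact hg.mono h1a h1
      have hgi2 : v ≤ g i := by rw [← hgb]; exact hg.mono (by omega) h2
      simp only [hT, Finset.mem_filter, Finset.mem_Icc]
      exact ⟨⟨by omega, by omega⟩, by omega⟩
  -- sum split
  have hsplit : ∀ c d : ℕ, c ≤ d → S g d = S g c + ∑ i ∈ Finset.Icc (c+1) d, g i := by
    intro c d hcd
    induction d, hcd using Nat.le_induction with
    | base => simp
    | succ d hd ih =>
      rw [S_succ, ih, ← Finset.insert_Icc_right_eq_Icc_add_one (by omega),
        Finset.sum_insert (by simp), ]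
      ring
  have hsum : S g b = S g (a-1) + T.card * v := by
    have h := hsplit (a-1) b (by omega)
    have hr : a - 1 + 1 = a := by omega
    rw [hr] at h
    rw [h, hTIcc]
    have : ∑ i ∈ Finset.Icc a b, g i = ∑ i ∈ Finset.Icc a b, v := by
      refine Finset.sum_congr rfl ?_
      intro i hi
      simp only [Finset.mem_Icc] at hi
      have hgi1 : g i ≤ v := by rw [← hga]; exact hg.mono h1a hi.1
      have hgi2 : v ≤ g i := by rw [← hgb]; exact hg.mono (by omega) hi.2
      omega
    rw [this, Finset.sum_const, smul_eq_mul]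
  -- parity at the two boundaries
  have hSb : S g b % 2 = 0 := by
    rcases hpar b with h | h
    · exact h
    · exfalso
      have hgb1 : g (b+1) = v := by omega
      have hbm : b + 1 ≤ M := by
        by_contra hc
        have := hM (b+1) (by omega)
        omega
      have : b + 1 ∈ T := by
        simp only [hT, Finset.mem_filter, Finset.mem_Icc]
        exact ⟨⟨by omega, hbm⟩, hgb1⟩
      have := T.le_max' _ this
      omega
  have hSa : S g (a-1) % 2 = 0 := by
    rcases Nat.eq_or_lt_of_le h1a with h1 | h1
    · have : a - 1 = 0 := by omega
      rw [this, S_zero]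
    · rcases hpar (a-1) with h | h
      · exact h
      · exfalso
        have hr : a - 1 + 1 = a := by omega
        rw [hr] at h
        have hga1 : g (a-1) = v := by omega
        have : a - 1 ∈ T := by
          simp only [hT, Finset.mem_filter, Finset.mem_Icc]
          exact ⟨⟨by omega, by omega⟩, hga1⟩
        have := T.min'_le _ this
        omega
  rw [hmult, Nat.even_iff]
  have hvodd : v % 2 = 1 := Nat.odd_iff.mp hv
  have hmm : (T.card * v) % 2 = T.card % 2 := by
    rw [Nat.mul_mod, hvodd]
    omega
  omega

include hsymp in
lemma gaux_symp : Symp (gaux f) :=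
  symp_of_pairs (gaux_part hpart hsymp) (gaux_pairs_eq hpart hsymp)

lemma gaux_special : SpecialPairs (gaux f) := by
  intro j hj
  obtain ⟨i, rfl⟩ : ∃ i, j = i + 1 := ⟨j-1, by omega⟩
  have h1 : 2*(i+1) - 1 = 2*i+1 := by omega
  have h2 : 2*(i+1) = 2*i+2 := by omega
  rw [h1, h2, gaux_odd f i, gaux_even f i]
  have h3 := eaux_le_Oaux hpart i
  have h4 := Oaux_le_eaux hpart i
  have h5 := eaux_mod hpart i
  have h6 := eaux_mod hpart (i+1)
  omega

lemma gaux_dom : Dom f (gaux f) := by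
  intro k
  rcases Nat.even_or_odd k with ⟨j, hj⟩ | ⟨j, hj⟩
  · have hk : k = 2*j := by omega
    rw [hk, (Sg hpart j).1]
    exact S_le_eaux hpart j
  · have hk : k = 2*j+1 := by omega
    rw [hk, (Sg hpart j).2]
    exact le_max_left _ _

omit hpart in
lemma Sg'_even {g' : ℕ → ℕ} {N : ℕ} (hp' : IsPartition g' N) (hsp : SpecialPairs g')
    (j : ℕ) : S g' (2*j) % 2 = 0 := by
  induction j with
  | zero =>
    have : S g' 0 = 0 := S_zero _
    have h0 : 2*0 = 0 := by omega
    rw [h0, this]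
  | succ j ih =>
    have e1 : S g' (2*j+1) = S g' (2*j) + g' (2*j+1) := S_succ g' (2*j)
    have e2 : S g' (2*j+2) = S g' (2*j+1) + g' (2*j+2) := S_succ g' (2*j+1)
    have hs : g' (2*j+1) % 2 = g' (2*j+2) % 2 := by
      have := hsp (j+1) (by omega)
      rwa [show 2*(j+1)-1 = 2*j+1 by omega] at this
    show S g' (2*j+2) % 2 = 0
    omega

lemma gaux_min {g' : ℕ → ℕ} (hp' : IsPartition g' (2*n)) (hsp' : SpecialPairs g')
    (hdom : Dom f g') : Dom (gaux f) g' := by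
  intro k
  rcases Nat.even_or_odd k with ⟨j, hj⟩ | ⟨j, hj⟩
  · have hk : k = 2*j := by omega
    rw [hk, (Sg hpart j).1]
    have h1 := hdom (2*j)
    have h2 := Sg'_even hp' hsp' j
    unfold eaux
    omega
  · have hk : k = 2*j+1 := by omega
    rw [hk, (Sg hpart j).2]
    have ht : S f (2*j+1) ≤ S g' (2*j+1) := hdom (2*j+1)
    have e1 : S g' (2*j+1) = S g' (2*j) + g' (2*j+1) := S_succ g' (2*j)
    have e2 : S g' (2*j+2) = S g' (2*j+1) + g' (2*j+2) := S_succ g' (2*j+1)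
    have hmono : g' (2*j+2) ≤ g' (2*j+1) := hp'.mono (by omega) (by omega)
    have hev0 : S g' (2*j) % 2 = 0 := Sg'_even hp' hsp' j
    have hev1 : S g' (2*j+2) % 2 = 0 := by
      have := Sg'_even hp' hsp' (j+1)
      rwa [show 2*(j+1) = 2*j+2 by omega] at this
    have hd0 : S f (2*j) ≤ S g' (2*j) := hdom (2*j)
    have hd2 : S f (2*j+2) ≤ S g' (2*j+2) := hdom (2*j+2)
    have b2 : eaux f (j+1) = S f (2*j+2) + S f (2*j+2) % 2 := rfl
    have b4 : eaux f j = S f (2*j) + S f (2*j) % 2 := rfl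
    have hO : Oaux f j = max (S f (2*j+1)) ((eaux f j + eaux f (j+1))/2) := rfl
    rw [hO]
    rcases max_cases (S f (2*j+1)) ((eaux f j + eaux f (j+1))/2) with ⟨h5, h6⟩ | ⟨h5, h6⟩ <;>
    rw [h5] <;> omega

end Main

/-- For a symplectic partition `λ` of `2n`, the set of special symplectic
partitions dominating `λ` is nonempty and has a least element (`sp(λ)`). -/
theorem stmt15 (n : ℕ) (f : ℕ → ℕ) (hpart : IsPartition f (2*n)) (hsymp : Symp f) :
    (∃ g, IsPartition g (2*n) ∧ Symp g ∧ SpecialPairs g ∧ Dom f g) ∧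
    ∃ g, (IsPartition g (2*n) ∧ Symp g ∧ SpecialPairs g ∧ Dom f g) ∧
      ∀ g', IsPartition g' (2*n) → Symp g' → SpecialPairs g' → Dom f g' → Dom g g' := by
  exact ⟨⟨gaux f, gaux_part hpart hsymp, gaux_symp hpart hsymp, gaux_special hpart,
      gaux_dom hpart⟩,
    gaux f, ⟨gaux_part hpart hsymp, gaux_symp hpart hsymp, gaux_special hpart,
      gaux_dom hpart⟩,
    fun g' h1 _ h3 h4 => gaux_min hpart h1 h3 h4⟩

end Wald
end

section
/- Let λ be a symplectic partition of 2n all of whose nonzero terms are even (padded with zeros), and let τ : Jord_bp(λ) ∪ {0} → ℤ/2ℤ satisfy τ(0) = 0 and τ(i) = 0 whenever mult_λ(i) = 1. Then, with the d-linking equivalence relations defined below: (i) for each d ∈ {1,2} the set 𝔍nt_d of d-equivalence classes with at least two elements is finite, 𝔍nt_1 contains exactly one infinite class, and every class in 𝔍nt_2 is finite; (ii) every class in 𝔍nt_d has odd minimum, and its maximum is even or infinite; (iii) for every k ≥ 1 there is at least one d ∈ {1,2} and a class in 𝔍nt_d containing both 2k−1 and 2k, and both values of d have this property if and only if λ_{2k−1}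 > λ_{2k}; (iv) for every k ≥ 1 there is at most one d ∈ {1,2} such that some class in 𝔍nt_d contains both 2k and 2k+1. -/
open Classical

namespace Wald

/-- `j` and `j+1` are `d`-linked (`d ∈ {1,2}`) -/
def LinkedStep (f : ℕ → ℕ) (τ : ℕ → ZMod 2) (d : ℕ) (j : ℕ) : Prop :=
  (f j = f (j+1) ∧ τ (f j) = (d : ZMod 2) + 1) ∨ (Odd j ∧ f (j+1) < f j)

/-- `j` and `j'` (with `1 ≤ j ≤ j'`) are `d`-linked -/
def Linked (f : ℕ → ℕ) (τ : ℕ → ZMod 2) (d : ℕ) (j j' : ℕ) : Prop :=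
  1 ≤ j ∧ j ≤ j' ∧ ∀ k, j ≤ k → k < j' → LinkedStep f τ d k

/-- the `d`-equivalence class of `j` -/
def ClassOf (f : ℕ → ℕ) (τ : ℕ → ZMod 2) (d j : ℕ) : Set ℕ :=
  {j' | Linked f τ d j j' ∨ Linked f τ d j' j}

/-- `C ∈ 𝔍nt_d`: a `d`-equivalence class with at least two elements -/
def IsBigClass (f : ℕ → ℕ) (τ : ℕ → ZMod 2) (d : ℕ) (C : Set ℕ) : Prop :=
  (∃ j, 1 ≤ j ∧ C = ClassOf f τ d j) ∧ ∃ a ∈ C, ∃ b ∈ C, a ≠ b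

section Aux

variable {f : ℕ → ℕ} {τ : ℕ → ZMod 2} {d : ℕ}

lemma linked_refl {j : ℕ} (hj : 1 ≤ j) : Linked f τ d j j :=
  ⟨hj, le_rfl, fun k hk hk' => absurd (lt_of_le_of_lt hk hk') (lt_irrefl _)⟩

lemma linked_trans {i j k : ℕ} (h1 : Linked f τ d i j) (h2 : Linked f τ d j k) :
    Linked f τ d i k := by
  refine ⟨h1.1, le_trans h1.2.1 h2.2.1, fun m hm hm' => ?_⟩
  rcases lt_or_ge m j with h | h
  · exact h1.2.2 m hm h
  · exact h2.2.2 m h hm'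

lemma r_trans {x y z : ℕ}
    (hxy : Linked f τ d x y ∨ Linked f τ d y x)
    (hyz : Linked f τ d y z ∨ Linked f τ d z y) :
    Linked f τ d x z ∨ Linked f τ d z x := by
  rcases hxy with h1 | h1 <;> rcases hyz with h2 | h2
  · exact Or.inl (linked_trans h1 h2)
  · rcases le_total x z with h | h
    · exact Or.inl ⟨h1.1, h, fun k hk1 hk2 => h1.2.2 k hk1 (lt_of_lt_of_le hk2 h2.2.1)⟩
    · exact Or.inr ⟨h2.1, h, fun k hk1 hk2 => h2.2.2 k hk1 (lt_of_lt_of_le hk2 h1.2.1)⟩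
  · rcases le_total x z with h | h
    · exact Or.inl ⟨le_trans h1.1 h1.2.1, h, fun k hk1 hk2 => h2.2.2 k (le_trans h1.2.1 hk1) hk2⟩
    · exact Or.inr ⟨le_trans h2.1 h2.2.1, h, fun k hk1 hk2 => h1.2.2 k (le_trans h2.2.1 hk1) hk2⟩
  · exact Or.inr (linked_trans h2 h1)

lemma mem_classOf_iff {j a : ℕ} :
    a ∈ ClassOf f τ d j ↔ (Linked f τ d j a ∨ Linked f τ d a j) := Iff.rfl

lemma one_le_of_mem {j a : ℕ} (hj : 1 ≤ j) (ha : a ∈ ClassOf f τ d j) : 1 ≤ a := by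
  rcases ha with h | h
  · exact le_trans hj h.2.1
  · exact h.1

lemma classOf_eq {j a : ℕ} (hj : 1 ≤ j) (ha : a ∈ ClassOf f τ d j) :
    ClassOf f τ d a = ClassOf f τ d j := by
  rw [mem_classOf_iff] at ha
  ext x
  rw [mem_classOf_iff, mem_classOf_iff]
  constructor
  · intro hx; exact r_trans ha hx
  · intro hx; exact r_trans ha.symm hx

lemma mem_classOf_self {j : ℕ} (hj : 1 ≤ j) : j ∈ ClassOf f τ d j :=
  Or.inl (linked_refl hj)

lemma linked_of_mem {j a b : ℕ} (hj : 1 ≤ j) (ha : a ∈ ClassOf f τ d j)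
    (hb : b ∈ ClassOf f τ d j) (hab : a ≤ b) : Linked f τ d a b := by
  rw [mem_classOf_iff] at ha hb
  have h := r_trans (x := a) (y := j) (z := b) ha.symm hb
  rcases h with h | h
  · exact h
  · have hba : b = a := le_antisymm h.2.1 hab
    subst hba; exact h

lemma linked_single {a : ℕ} (ha : 1 ≤ a) (h : LinkedStep f τ d a) : Linked f τ d a (a+1) :=
  ⟨ha, Nat.le_succ a, fun k hk1 hk2 => by
    have hk : k = a := by omega
    rwa [hk]⟩

end Aux

/-- Claims (3)–(6) in the proof of Proposition 1.11, about the `d`-linking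
equivalence classes (`d ∈ {1,2}`). -/
theorem stmt16 (n : ℕ) (f : ℕ → ℕ)
    (hpart : IsPartition f (2*n)) (hsymp : Symp f)
    (heven : ∀ j, 1 ≤ j → Even (f j))
    (τ : ℕ → ZMod 2) (hτ0 : τ 0 = 0) (hτ1 : ∀ i, mult f i = 1 → τ i = 0) :
    -- (i)
    ({C | IsBigClass f τ 1 C}.Finite ∧ {C | IsBigClass f τ 2 C}.Finite ∧
      (∃! C, IsBigClass f τ 1 C ∧ C.Infinite) ∧
      (∀ C, IsBigClass f τ 2 C → C.Finite)) ∧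
    -- (ii)
    (∀ d, (d = 1 ∨ d = 2) → ∀ C, IsBigClass f τ d C →
      (∃ j, IsLeast C j ∧ Odd j) ∧
      (C.Infinite ∨ ∃ j, IsGreatest C j ∧ Even j)) ∧
    -- (iii)
    (∀ k, 1 ≤ k →
      (∃ d, (d = 1 ∨ d = 2) ∧ ∃ C, IsBigClass f τ d C ∧ 2*k - 1 ∈ C ∧ 2*k ∈ C) ∧
      ((∀ d, (d = 1 ∨ d = 2) → ∃ C, IsBigClass f τ d C ∧ 2*k - 1 ∈ C ∧ 2*k ∈ C)
        ↔ f (2*k) < f (2*k - 1))) ∧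
    -- (iv)
    (∀ k, 1 ≤ k → ∀ d d', (d = 1 ∨ d = 2) → (d' = 1 ∨ d' = 2) →
      ∀ C C', IsBigClass f τ d C → IsBigClass f τ d' C' →
        2*k ∈ C → 2*k + 1 ∈ C → 2*k ∈ C' → 2*k + 1 ∈ C' → d = d') := by
  obtain ⟨M, hM⟩ := hpart.fin
  have hzero : ∀ j, M + 1 ≤ j → f j = 0 := fun j hj => hM j (by omega)
  have step1 : ∀ j, M + 1 ≤ j → LinkedStep f τ 1 j := by
    intro j hj
    left
    constructor
    · rw [hzero j hj, hzero (j+1) (by omega)]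
    · rw [hzero j hj, hτ0]; decide
  have step2not : ∀ j, M + 1 ≤ j → ¬ LinkedStep f τ 2 j := by
    intro j hj h
    rcases h with ⟨he, ht⟩ | ⟨_, hlt⟩
    · rw [hzero j hj, hτ0] at ht; exact absurd ht (by decide)
    · rw [hzero j hj, hzero (j+1) (by omega)] at hlt; omega
  -- representation of big classes
  have rep : ∀ (d : ℕ) (C : Set ℕ), IsBigClass f τ d C →
      ∃ A, IsLeast C A ∧ 1 ≤ A ∧ (∃ b ∈ C, A < b) ∧ C = ClassOf f τ d A := by
    intro d C hC
    obtain ⟨⟨j, hj, hCj⟩, a0, ha0, b0, hb0, hab⟩ := hC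
    have hne : C.Nonempty := ⟨a0, ha0⟩
    have hAmemC : sInf C ∈ C := Nat.sInf_mem hne
    have hAmem : sInf C ∈ ClassOf f τ d j := by rw [← hCj]; exact hAmemC
    have hA1 : 1 ≤ sInf C := one_le_of_mem hj hAmem
    have hCA : C = ClassOf f τ d (sInf C) := by
      rw [classOf_eq hj hAmem]; exact hCj
    refine ⟨sInf C, ⟨hAmemC, fun x hx => Nat.sInf_le hx⟩, hA1, ?_, hCA⟩
    rcases eq_or_ne a0 (sInf C) with h | h
    · exact ⟨b0, hb0, by have := Nat.sInf_le hb0; omega⟩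
    · exact ⟨a0, ha0, by have := Nat.sInf_le ha0; omega⟩
  have stepOf : ∀ (d : ℕ) (C : Set ℕ), IsBigClass f τ d C → ∀ a, a ∈ C → a + 1 ∈ C →
      LinkedStep f τ d a := by
    intro d C hC a ha ha'
    obtain ⟨⟨j, hj, hCj⟩, -⟩ := hC
    rw [hCj] at ha ha'
    exact (linked_of_mem hj ha ha' (Nat.le_succ a)).2.2 a le_rfl (Nat.lt_succ_self a)
  have mkBig : ∀ (d p : ℕ), 1 ≤ p → LinkedStep f τ d p →
      IsBigClass f τ d (ClassOf f τ d p) ∧ p ∈ ClassOf f τ d p ∧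
        p + 1 ∈ ClassOf f τ d p := by
    intro d p hp hstep
    have hmem : p ∈ ClassOf f τ d p := mem_classOf_self hp
    have hmem' : p + 1 ∈ ClassOf f τ d p := Or.inl (linked_single hp hstep)
    exact ⟨⟨⟨p, hp, rfl⟩, p, hmem, p+1, hmem', by omega⟩, hmem, hmem'⟩
  refine ⟨⟨?_, ?_, ?_, ?_⟩, ?_, ?_, ?_⟩
  · -- (i.a) finiteness for d = 1
    apply Set.Finite.subset ((Set.finite_Icc 1 (M+1)).image (ClassOf f τ 1))
    intro C hC
    obtain ⟨A, hAleast, hA1, ⟨b, hb, hAb⟩, hCA⟩ := rep 1 C hC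
    by_cases hAM : A ≤ M + 1
    · exact ⟨A, Set.mem_Icc.mpr ⟨hA1, hAM⟩, hCA.symm⟩
    · exfalso
      have hlink : Linked f τ 1 (M+1) A :=
        ⟨by omega, by omega, fun k hk1 hk2 => step1 k hk1⟩
      have hmem : (M+1) ∈ C := by rw [hCA]; exact Or.inr hlink
      have := hAleast.2 hmem; omega
  · -- (i.b) finiteness for d = 2
    apply Set.Finite.subset ((Set.finite_Icc 1 (M+1)).image (ClassOf f τ 2))
    intro C hC
    obtain ⟨A, hAleast, hA1, ⟨b, hb, hAb⟩, hCA⟩ := rep 2 C hC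
    have hbmem : b ∈ ClassOf f τ 2 A := by rw [← hCA]; exact hb
    have hlk := linked_of_mem hA1 (mem_classOf_self hA1) hbmem (le_of_lt hAb)
    have hstep := hlk.2.2 A le_rfl hAb
    have hAM : A ≤ M := by
      by_contra h
      exact step2not A (by omega) hstep
    exact ⟨A, Set.mem_Icc.mpr ⟨hA1, by omega⟩, hCA.symm⟩
  · -- (i.c) unique infinite class for d = 1
    refine ⟨ClassOf f τ 1 (M+1), ⟨(mkBig 1 (M+1) (by omega) (step1 (M+1) le_rfl)).1, ?_⟩, ?_⟩
    · have hsub : Set.Ici (M+1) ⊆ ClassOf f τ 1 (M+1) := by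
        intro x hx
        exact Or.inl ⟨by omega, hx, fun k hk1 hk2 => step1 k hk1⟩
      exact Set.Infinite.mono hsub (Set.Ici_infinite (M+1))
    · rintro C ⟨hbig, hinf⟩
      obtain ⟨A, hAleast, hA1, -, hCA⟩ := rep 1 C hbig
      obtain ⟨x, hx, hxM⟩ : ∃ x ∈ C, M + 1 < x := by
        by_contra h
        push_neg at h
        exact hinf (Set.Finite.subset (Set.finite_Icc 0 (M+1))
          (fun y hy => Set.mem_Icc.mpr ⟨Nat.zero_le y, h y hy⟩))
      have hxA : x ∈ ClassOf f τ 1 A := by rw [← hCA]; exact hx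
      have hM1 : (M+1) ∈ ClassOf f τ 1 A := by
        rw [← classOf_eq hA1 hxA]
        exact Or.inr ⟨by omega, by omega, fun k hk1 hk2 => step1 k hk1⟩
      rw [hCA]
      exact (classOf_eq hA1 hM1).symm
  · -- (i.d) every 2-class is finite
    intro C hC
    obtain ⟨A, hAleast, hA1, ⟨b, hb, hAb⟩, hCA⟩ := rep 2 C hC
    have hbmem : b ∈ ClassOf f τ 2 A := by rw [← hCA]; exact hb
    have hlk := linked_of_mem hA1 (mem_classOf_self hA1) hbmem (le_of_lt hAb)
    have hAM : A ≤ M := by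
      by_contra h
      exact step2not A (by omega) (hlk.2.2 A le_rfl hAb)
    apply Set.Finite.subset (Set.finite_Icc 1 (M+1))
    intro x hx
    have hxC := hx
    have hxmem : x ∈ ClassOf f τ 2 A := by rw [← hCA]; exact hx
    have hx1 : 1 ≤ x := one_le_of_mem hA1 hxmem
    refine Set.mem_Icc.mpr ⟨hx1, ?_⟩
    by_contra h
    push_neg at h
    have hlkx := linked_of_mem hA1 (mem_classOf_self hA1) hxmem (by omega)
    exact step2not (M+1) le_rfl (hlkx.2.2 (M+1) (by omega) (by omega))
  · -- (ii)
    intro d _hd C hC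
    obtain ⟨A, hAleast, hA1, ⟨b, hbC, hAb⟩, hCA⟩ := rep d C hC
    have hAmem : A ∈ ClassOf f τ d A := mem_classOf_self hA1
    have hbmem : b ∈ ClassOf f τ d A := by rw [← hCA]; exact hbC
    have hstepA : LinkedStep f τ d A :=
      (linked_of_mem hA1 hAmem hbmem (le_of_lt hAb)).2.2 A le_rfl hAb
    have hAodd : Odd A := by
      by_contra hA
      rw [Nat.not_odd_iff_even, Nat.even_iff] at hA
      obtain ⟨c, hc1, hc2, hc3⟩ : ∃ c, A = c + 1 ∧ 1 ≤ c ∧ Odd c :=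
        ⟨A - 1, by omega, by omega, by rw [Nat.odd_iff]; omega⟩
      have hstepc : LinkedStep f τ d c := by
        rcases hstepA with ⟨heq, hτe⟩ | ⟨hodd, -⟩
        · have hmono : f A ≤ f c := hpart.mono hc2 (by omega)
          rcases lt_or_eq_of_le hmono with hlt | he
          · exact Or.inr ⟨hc3, by rw [← hc1]; exact hlt⟩
          · refine Or.inl ⟨?_, ?_⟩
            · rw [← hc1]; exact he.symm
            · rw [← he]; exact hτe
        · rw [Nat.odd_iff] at hodd; omega
      have hcmem : c ∈ ClassOf f τ d A := by
        rw [← classOf_eq hA1 hAmem]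
        refine Or.inr ?_
        rw [hc1]
        exact linked_single hc2 hstepc
      have hcC : c ∈ C := by rw [hCA]; exact hcmem
      have := hAleast.2 hcC
      omega
    refine ⟨⟨A, hAleast, hAodd⟩, ?_⟩
    rcases Set.finite_or_infinite C with hfin | hinf
    · right
      have hne : hfin.toFinset.Nonempty := by
        rw [Set.Finite.toFinset_nonempty]; exact ⟨A, hAleast.1⟩
      set B := hfin.toFinset.max' hne with hBdef
      have hBmem : B ∈ C := by
        have := hfin.toFinset.max'_mem hne
        rwa [Set.Finite.mem_toFinset] at this
      have hBub : ∀ x ∈ C, x ≤ B := fun x hx =>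
        hfin.toFinset.le_max' x ((Set.Finite.mem_toFinset hfin).mpr hx)
      refine ⟨B, ⟨hBmem, fun x hx => hBub x hx⟩, ?_⟩
      by_contra hBe
      rw [Nat.not_even_iff_odd, Nat.odd_iff] at hBe
      have hAB : A < B := by
        have h1 := hBub b hbC
        have h2 := hAleast.2 hBmem
        omega
      obtain ⟨c, hc1, hc2, hc3⟩ : ∃ c, B = c + 1 ∧ 1 ≤ c ∧ c % 2 = 0 :=
        ⟨B - 1, by omega, by omega, by omega⟩
      have hBmemA : B ∈ ClassOf f τ d A := by rw [← hCA]; exact hBmem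
      have hlkAB := linked_of_mem hA1 hAmem hBmemA (le_of_lt hAB)
      have hstepc := hlkAB.2.2 c (by omega) (by omega)
      rcases hstepc with ⟨heq, hτe⟩ | ⟨hodd, -⟩
      · have hstepB : LinkedStep f τ d B := by
          have hmono : f (B+1) ≤ f B := hpart.mono (by omega : 1 ≤ B) (Nat.le_succ B)
          rcases lt_or_eq_of_le hmono with hlt | he
          · exact Or.inr ⟨by rw [Nat.odd_iff]; omega, hlt⟩
          · refine Or.inl ⟨he.symm, ?_⟩
            rw [hc1, ← heq]; exact hτe
        have hB1mem : B + 1 ∈ ClassOf f τ d A := by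
          rw [← classOf_eq hA1 hBmemA]
          exact Or.inl (linked_single (by omega) hstepB)
        have hB1C : B + 1 ∈ C := by rw [hCA]; exact hB1mem
        have := hBub (B+1) hB1C
        omega
      · rw [Nat.odd_iff] at hodd; omega
    · exact Or.inl hinf
  · -- (iii)
    intro k hk
    have hpe : 2 * k = (2 * k - 1) + 1 := by omega
    rw [hpe]
    simp only [Nat.add_sub_cancel]
    set p := 2 * k - 1 with hp
    have hp1 : 1 ≤ p := by omega
    have hpodd : Odd p := by rw [Nat.odd_iff]; omega
    have hmono : f (p+1) ≤ f p := hpart.mono hp1 (by omega)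
    constructor
    · by_cases hlt : f (p+1) < f p
      · obtain ⟨hbig, hm, hm'⟩ := mkBig 1 p hp1 (Or.inr ⟨hpodd, hlt⟩)
        exact ⟨1, Or.inl rfl, _, hbig, hm, hm'⟩
      · have heq : f p = f (p+1) := by omega
        have h01 : τ (f p) = 0 ∨ τ (f p) = 1 := by
          have hz : ∀ x : ZMod 2, x = 0 ∨ x = 1 := by decide
          exact hz _
        rcases h01 with h | h
        · obtain ⟨hbig, hm, hm'⟩ := mkBig 1 p hp1 (Or.inl ⟨heq, by rw [h]; decide⟩)
          exact ⟨1, Or.inl rfl, _, hbig, hm, hm'⟩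
        · obtain ⟨hbig, hm, hm'⟩ := mkBig 2 p hp1 (Or.inl ⟨heq, by rw [h]; decide⟩)
          exact ⟨2, Or.inr rfl, _, hbig, hm, hm'⟩
    · constructor
      · intro hall
        by_contra hnlt
        obtain ⟨C1, hb1, hm1, hm1'⟩ := hall 1 (Or.inl rfl)
        obtain ⟨C2, hb2, hm2, hm2'⟩ := hall 2 (Or.inr rfl)
        have hs1 := stepOf 1 C1 hb1 p hm1 hm1'
        have hs2 := stepOf 2 C2 hb2 p hm2 hm2'
        have h1 : τ (f p) = ((1 : ℕ) : ZMod 2) + 1 := by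
          rcases hs1 with ⟨-, h⟩ | ⟨-, h⟩
          · exact h
          · omega
        have h2 : τ (f p) = ((2 : ℕ) : ZMod 2) + 1 := by
          rcases hs2 with ⟨-, h⟩ | ⟨-, h⟩
          · exact h
          · omega
        rw [h1] at h2
        exact absurd h2 (by decide)
      · intro hlt d hd
        obtain ⟨hbig, hm, hm'⟩ := mkBig d p hp1 (Or.inr ⟨hpodd, hlt⟩)
        exact ⟨_, hbig, hm, hm'⟩
  · -- (iv)
    intro k hk d d' hd hd' C C' hC hC' h2k h2k1 h2k' h2k1'
    have hs := stepOf d C hC (2*k) h2k h2k1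
    have hs' := stepOf d' C' hC' (2*k) h2k' h2k1'
    have h1 : τ (f (2*k)) = (d : ZMod 2) + 1 := by
      rcases hs with ⟨-, h⟩ | ⟨h, -⟩
      · exact h
      · rw [Nat.odd_iff] at h; omega
    have h2 : τ (f (2*k)) = (d' : ZMod 2) + 1 := by
      rcases hs' with ⟨-, h⟩ | ⟨h, -⟩
      · exact h
      · rw [Nat.odd_iff] at h; omega
    rw [h1] at h2
    rcases hd with rfl | rfl <;> rcases hd' with rfl | rfl
    · rfl
    · exact absurd h2 (by decide)
    · exact absurd h2 (by decide)
    · rfl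

end Wald
end

section
/- Let λ be an orthogonal partition of 2n+1, written with 2n+1 terms λ_1 ≥ … ≥ λ_{2n+1} ≥ 0. The 2n+1 integers λ_j + (2n+1−j), j = 1,…,2n+1, are pairwise distinct; exactly n of them are even, written 2z_1 > … > 2z_n, and exactly n+1 of them are odd, written 2z'_1+1 > … > 2z'_{n+1}+1. Moreover, for every k ∈ {1,…,2n+1}: Σ_{j=1}^{k} (λ_j + 2n+1−j) = 2(z'_1 + … + z'_{⌈k/2⌉}) + ⌈k/2⌉ + ν_k(λ) + 2(z_1 + … + z_{⌊k/2⌋}), where ν_k(λ) = 1 if λ_k is even and S_k(λ) + k is odd, and ν_k(λ) = 0 otherwise. -/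
open Classical

namespace Wald

open Finset


lemma icc_succ17 (k : ℕ) : Finset.Icc 1 (k+1) = insert (k+1) (Finset.Icc 1 k) := by
  ext x; simp only [Finset.mem_Icc, Finset.mem_insert]; omega

lemma filter_succ17 (k : ℕ) (p : ℕ → Prop) [DecidablePred p] :
    ((Finset.Icc 1 (k+1)).filter p).card
      = ((Finset.Icc 1 k).filter p).card + (if p (k+1) then 1 else 0) := by
  rw [icc_succ17, Finset.filter_insert]
  split
  · rw [Finset.card_insert_of_notMem (by simp)]
  · simp

lemma sum_succ17 (k : ℕ) (g : ℕ → ℕ) :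
    ∑ j ∈ Finset.Icc 1 (k+1), g j = ∑ j ∈ Finset.Icc 1 k, g j + g (k+1) := by
  rw [icc_succ17, Finset.sum_insert (by simp)]
  ring

lemma count_partition17 (k : ℕ) (g : ℕ → ℕ) :
    ((Finset.Icc 1 k).filter (fun j => Odd (g j))).card
      + ((Finset.Icc 1 k).filter (fun j => Even (g j))).card = k := by
  have h1 : ((Finset.Icc 1 k).filter (fun j => Even (g j)))
      = ((Finset.Icc 1 k).filter (fun j => ¬ Odd (g j))) := by
    apply Finset.filter_congr
    intro x _
    rw [Nat.even_iff, Nat.odd_iff]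
    omega
  rw [h1, Finset.card_filter_add_card_filter_not, Nat.card_Icc]
  omega

lemma key_unique17 {s : Finset ℕ} {x y : ℕ} (hx : x ∈ s) (hy : y ∈ s)
    (h : (s.filter (fun t => x ≤ t)).card = (s.filter (fun t => y ≤ t)).card) : x = y := by
  have main : ∀ a b : ℕ, a ∈ s → b ∈ s → a ≤ b →
      (s.filter (fun t => a ≤ t)).card = (s.filter (fun t => b ≤ t)).card → a = b := by
    intro a b ha hb hle hcard
    have hsub : s.filter (fun t => b ≤ t) ⊆ s.filter (fun t => a ≤ t) := by
      intro t ht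
      simp only [Finset.mem_filter] at ht ⊢
      exact ⟨ht.1, le_trans hle ht.2⟩
    have heq := Finset.eq_of_subset_of_card_le hsub (le_of_eq hcard)
    have hamem : a ∈ s.filter (fun t => b ≤ t) := by
      rw [heq]; simp only [Finset.mem_filter]; exact ⟨ha, le_refl a⟩
    simp only [Finset.mem_filter] at hamem
    exact le_antisymm hle hamem.2
  rcases le_total x y with hle | hle
  · exact main x y hx hy hle h
  · exact (main y x hy hx hle h.symm).symm

lemma inj_of_anti17 {φ : ℕ → ℕ} {m : ℕ}
    (hφ : ∀ a b, 1 ≤ a → a < b → b ≤ m → φ b < φ a) :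
    Set.InjOn φ (Finset.Icc 1 m : Finset ℕ) := by
  intro a ha b hb hab
  simp only [Finset.coe_Icc, Set.mem_Icc] at ha hb
  rcases lt_trichotomy a b with h | h | h
  · exact absurd hab (hφ a b ha.1 h hb.2).ne'
  · exact h
  · exact absurd hab (hφ b a hb.1 h ha.2).ne

lemma filter_ge_image17 {φ : ℕ → ℕ} {m h : ℕ}
    (hφ : ∀ a b, 1 ≤ a → a < b → b ≤ m → φ b < φ a) (h1 : 1 ≤ h) (h2 : h ≤ m) :
    ((Finset.Icc 1 m).image φ).filter (fun x => φ h ≤ x) = (Finset.Icc 1 h).image φ := by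
  ext x
  simp only [Finset.mem_filter, Finset.mem_image, Finset.mem_Icc]
  constructor
  · rintro ⟨⟨i, ⟨hi1, hi2⟩, rfl⟩, hging⟩
    refine ⟨i, ⟨hi1, ?_⟩, rfl⟩
    by_contra hih
    push_neg at hih
    exact absurd hging (not_le.mpr (hφ h i h1 hih hi2))
  · rintro ⟨i, ⟨hi1, hi2⟩, rfl⟩
    refine ⟨⟨i, ⟨hi1, le_trans hi2 h2⟩, rfl⟩, ?_⟩
    rcases eq_or_lt_of_le hi2 with rfl | hlt
    · exact le_refl _
    · exact (hφ i h hi1 hlt h2).le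




private lemma mu_anti17 {n : ℕ} {f : ℕ → ℕ} (hpart : IsPartition f (2*n+1)) :
    ∀ j k, 1 ≤ j → j < k → k ≤ 2*n+1 →
      f k + (2*n+1-k) < f j + (2*n+1-j) := by
  intro j k hj hjk hk
  have h1 : f k ≤ f j := hpart.mono hj (le_of_lt hjk)
  have h2 : 2*n+1-k < 2*n+1-j := by omega
  omega

private lemma zero_tail17 {n : ℕ} {f : ℕ → ℕ} (hpart : IsPartition f (2*n+1)) :
    ∀ j, 2*n+1 < j → f j = 0 := by
  by_contra hc
  push_neg at hc
  obtain ⟨j, hj1, hj2⟩ := hc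
  obtain ⟨m0, hm0⟩ := hpart.fin
  set m := max j m0 with hm
  have htot : S f m = 2*n+1 := hpart.total m (fun i hi => hm0 i (lt_of_le_of_lt (le_max_right _ _) hi))
  have hge : ∀ i, 1 ≤ i → i ≤ j → 1 ≤ f i := by
    intro i hi1 hi2
    have := hpart.mono hi1 hi2
    omega
  have hsub : Finset.Icc 1 j ⊆ Finset.Icc 1 m := by
    apply Finset.Icc_subset_Icc_right (le_max_left _ _)
  have : (Finset.Icc 1 j).card ≤ ∑ i ∈ Finset.Icc 1 m, f i := by
    calc (Finset.Icc 1 j).card = ∑ i ∈ Finset.Icc 1 j, 1 := by simp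
    _ ≤ ∑ i ∈ Finset.Icc 1 j, f i := by
        apply Finset.sum_le_sum
        intro i hi
        simp only [Finset.mem_Icc] at hi
        exact hge i hi.1 hi.2
    _ ≤ ∑ i ∈ Finset.Icc 1 m, f i := Finset.sum_le_sum_of_subset hsub
  rw [Nat.card_Icc] at this
  unfold S at htot
  omega

private lemma stot17 {n : ℕ} {f : ℕ → ℕ} (hpart : IsPartition f (2*n+1)) :
    ∑ j ∈ Finset.Icc 1 (2*n+1), f j = 2*n+1 :=
  hpart.total (2*n+1) (zero_tail17 hpart)



lemma counts17 {n : ℕ} {f : ℕ → ℕ} (z z' : ℕ → ℕ)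
    (hanti : ∀ j k, 1 ≤ j → j < k → k ≤ 2*n+1 →
      f k + (2*n+1-k) < f j + (2*n+1-j))
    (hz : ∀ h1 h2, 1 ≤ h1 → h1 < h2 → h2 ≤ n → z h2 < z h1)
    (hz' : ∀ h1 h2, 1 ≤ h1 → h1 < h2 → h2 ≤ n + 1 → z' h2 < z' h1)
    (hzv : ∀ h, 1 ≤ h → h ≤ n →
      ∃ j, 1 ≤ j ∧ j ≤ 2*n+1 ∧ f j + (2*n+1 - j) = 2 * z h)
    (hz'v : ∀ h, 1 ≤ h → h ≤ n + 1 →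
      ∃ j, 1 ≤ j ∧ j ≤ 2*n+1 ∧ f j + (2*n+1 - j) = 2 * z' h + 1) :
    ((Finset.Icc 1 (2*n+1)).filter (fun j => Even (f j + (2*n+1 - j)))).card = n ∧
    ((Finset.Icc 1 (2*n+1)).filter (fun j => Odd (f j + (2*n+1 - j)))).card = n + 1 := by
  have hzv2 : ∀ h, ∃ j, 1 ≤ h → h ≤ n → (1 ≤ j ∧ j ≤ 2*n+1 ∧ f j + (2*n+1 - j) = 2 * z h) := by
    intro h
    by_cases hc : 1 ≤ h ∧ h ≤ n
    · obtain ⟨j, hj⟩ := hzv h hc.1 hc.2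
      exact ⟨j, fun _ _ => hj⟩
    · exact ⟨0, fun h1 h2 => absurd ⟨h1, h2⟩ hc⟩
  choose g hg using hzv2
  have hz'v2 : ∀ h, ∃ j, 1 ≤ h → h ≤ n+1 → (1 ≤ j ∧ j ≤ 2*n+1 ∧ f j + (2*n+1 - j) = 2 * z' h + 1) := by
    intro h
    by_cases hc : 1 ≤ h ∧ h ≤ n+1
    · obtain ⟨j, hj⟩ := hz'v h hc.1 hc.2
      exact ⟨j, fun _ _ => hj⟩
    · exact ⟨0, fun h1 h2 => absurd ⟨h1, h2⟩ hc⟩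
  choose g' hg' using hz'v2
  have hcardE : (Finset.Icc 1 n).card ≤ ((Finset.Icc 1 (2*n+1)).filter (fun j => Even (f j + (2*n+1 - j)))).card := by
    apply Finset.card_le_card_of_injOn g
    · intro h hh
      simp only [Finset.mem_coe, Finset.mem_Icc] at hh
      obtain ⟨h1, h2, h3⟩ := hg h hh.1 hh.2
      simp only [Finset.mem_coe, Finset.mem_filter, Finset.mem_Icc]
      exact ⟨⟨h1, h2⟩, h3 ▸ (even_two_mul _)⟩
    · intro a ha b hb hab
      simp only [Finset.coe_Icc, Set.mem_Icc] at ha hb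
      obtain ⟨_, _, ha3⟩ := hg a ha.1 ha.2
      obtain ⟨_, _, hb3⟩ := hg b hb.1 hb.2
      have : 2 * z a = 2 * z b := by rw [← ha3, ← hb3, hab]
      rcases lt_trichotomy a b with h | h | h
      · exact absurd this (by have := hz a b ha.1 h hb.2; omega)
      · exact h
      · exact absurd this (by have := hz b a hb.1 h ha.2; omega)
  have hcardO : (Finset.Icc 1 (n+1)).card ≤ ((Finset.Icc 1 (2*n+1)).filter (fun j => Odd (f j + (2*n+1 - j)))).card := by
    apply Finset.card_le_card_of_injOn g'
    · intro h hh
      simp only [Finset.mem_coe, Finset.mem_Icc] at hh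
      obtain ⟨h1, h2, h3⟩ := hg' h hh.1 hh.2
      simp only [Finset.mem_coe, Finset.mem_filter, Finset.mem_Icc]
      exact ⟨⟨h1, h2⟩, h3 ▸ ⟨z' h, by ring⟩⟩
    · intro a ha b hb hab
      simp only [Finset.coe_Icc, Set.mem_Icc] at ha hb
      obtain ⟨_, _, ha3⟩ := hg' a ha.1 ha.2
      obtain ⟨_, _, hb3⟩ := hg' b hb.1 hb.2
      have : 2 * z' a + 1 = 2 * z' b + 1 := by rw [← ha3, ← hb3, hab]
      rcases lt_trichotomy a b with h | h | h
      · exact absurd this (by have := hz' a b ha.1 h hb.2; omega)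
      · exact h
      · exact absurd this (by have := hz' b a hb.1 h ha.2; omega)
  simp only [Nat.card_Icc] at hcardE hcardO
  have hpartn := count_partition17 (2*n+1) (fun j => f j + (2*n+1 - j))
  omega



lemma enum17 {μ ψ : ℕ → ℕ} {M m : ℕ} {p : ℕ → Prop} [DecidablePred p]
    (hμ : ∀ a b, 1 ≤ a → a < b → b ≤ M → μ b < μ a)
    (hψ : ∀ a b, 1 ≤ a → a < b → b ≤ m → ψ b < ψ a)
    (hval : ∀ h, 1 ≤ h → h ≤ m → ∃ j, 1 ≤ j ∧ j ≤ M ∧ μ j = ψ h)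
    (hp : ∀ h, 1 ≤ h → h ≤ m → p (ψ h))
    (hcard : ((Finset.Icc 1 M).filter (fun j => p (μ j))).card = m) :
    ∀ k, 1 ≤ k → k ≤ M → p (μ k) →
      μ k = ψ (((Finset.Icc 1 k).filter (fun j => p (μ j))).card) := by
  intro k hk1 hk2 hpk
  set s : Finset ℕ := ((Finset.Icc 1 M).filter (fun j => p (μ j))).image μ with hs
  have himg : s = (Finset.Icc 1 m).image ψ := by
    apply (Finset.eq_of_subset_of_card_le ?_ ?_).symm
    · intro x hx
      simp only [Finset.mem_image, Finset.mem_Icc] at hx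
      obtain ⟨h, ⟨hh1, hh2⟩, rfl⟩ := hx
      obtain ⟨j, hj1, hj2, hj3⟩ := hval h hh1 hh2
      simp only [hs, Finset.mem_image, Finset.mem_filter, Finset.mem_Icc]
      exact ⟨j, ⟨⟨hj1, hj2⟩, by rw [hj3]; exact hp h hh1 hh2⟩, hj3⟩
    · calc s.card ≤ ((Finset.Icc 1 M).filter (fun j => p (μ j))).card := Finset.card_image_le
        _ = m := hcard
        _ = ((Finset.Icc 1 m).image ψ).card := by
            rw [Finset.card_image_of_injOn (inj_of_anti17 hψ), Nat.card_Icc]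
            omega
  set o : ℕ := ((Finset.Icc 1 k).filter (fun j => p (μ j))).card with ho
  have ho1 : 1 ≤ o := by
    rw [ho]
    apply Finset.card_pos.mpr
    exact ⟨k, by simp only [Finset.mem_filter, Finset.mem_Icc]; exact ⟨⟨hk1, le_refl k⟩, hpk⟩⟩
  have ho2 : o ≤ m := by
    rw [ho, ← hcard]
    apply Finset.card_le_card
    apply Finset.filter_subset_filter
    exact Finset.Icc_subset_Icc_right hk2
  have hxmem : μ k ∈ s := by
    simp only [hs, Finset.mem_image, Finset.mem_filter, Finset.mem_Icc]
    exact ⟨k, ⟨⟨hk1, hk2⟩, hpk⟩, rfl⟩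
  have hymem : ψ o ∈ s := by
    rw [himg]
    simp only [Finset.mem_image, Finset.mem_Icc]
    exact ⟨o, ⟨ho1, ho2⟩, rfl⟩
  apply key_unique17 hxmem hymem
  have hcount_y : (s.filter (fun t => ψ o ≤ t)).card = o := by
    rw [himg, filter_ge_image17 hψ ho1 ho2,
      Finset.card_image_of_injOn ((inj_of_anti17 hψ).mono ?_), Nat.card_Icc]
    · omega
    · simp only [Finset.coe_Icc]
      exact Set.Icc_subset_Icc_right ho2
  have hcount_x : (s.filter (fun t => μ k ≤ t)).card = o := by
    have heq : s.filter (fun t => μ k ≤ t) = ((Finset.Icc 1 k).filter (fun j => p (μ j))).image μ := by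
      ext x
      simp only [hs, Finset.mem_filter, Finset.mem_image, Finset.mem_Icc]
      constructor
      · rintro ⟨⟨j, ⟨⟨hj1, hj2⟩, hjp⟩, rfl⟩, hle⟩
        refine ⟨j, ⟨⟨hj1, ?_⟩, hjp⟩, rfl⟩
        by_contra hc
        push_neg at hc
        exact absurd hle (not_le.mpr (hμ k j hk1 hc hj2))
      · rintro ⟨j, ⟨⟨hj1, hj2⟩, hjp⟩, rfl⟩
        refine ⟨⟨j, ⟨⟨hj1, le_trans hj2 hk2⟩, hjp⟩, rfl⟩, ?_⟩
        rcases eq_or_lt_of_le hj2 with rfl | hlt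
        · exact le_refl _
        · exact (hμ j k hj1 hlt hk2).le
    rw [heq, ho, Finset.card_image_of_injOn]
    apply (inj_of_anti17 hμ).mono
    intro t ht
    simp only [Finset.coe_filter, Set.mem_setOf_eq, Finset.mem_Icc] at ht
    simp only [Finset.coe_Icc, Set.mem_Icc]
    exact ⟨ht.1.1, le_trans ht.1.2 hk2⟩
  rw [hcount_x, hcount_y]



lemma runB17 {f : ℕ → ℕ}
    (hmono : ∀ ⦃j k : ℕ⦄, 1 ≤ j → j ≤ k → f k ≤ f j)
    (horth : ∀ i, Even i → 1 ≤ i → Even (Set.ncard {j : ℕ | 1 ≤ j ∧ f j = i}))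
    (k : ℕ) (hk1 : 1 ≤ k) (hcond : Odd (f k) ∨ f (k+1) ≠ f k) :
    Even (((Finset.Icc 1 k).filter (fun j => Even (f j))).card) := by
  set F : Finset ℕ := (Finset.Icc 1 k).filter (fun j => Even (f j)) with hF
  have hcard : F.card = ∑ v ∈ F.image f, (F.filter (fun j => f j = v)).card :=
    Finset.card_eq_sum_card_fiberwise (fun x hx => Finset.mem_image_of_mem f hx)
  rw [hcard]
  rw [even_iff_two_dvd]
  apply Finset.dvd_sum
  intro v hv
  rw [← even_iff_two_dvd]
  simp only [Finset.mem_image, hF, Finset.mem_filter, Finset.mem_Icc] at hv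
  obtain ⟨j₀, ⟨⟨hj01, hj02⟩, hj0e⟩, rfl⟩ := hv
  have hvk : f k ≤ f j₀ := hmono hj01 hj02
  have hv1 : 1 ≤ f j₀ := by
    by_contra hc
    push_neg at hc
    have hfk : f k = 0 := by omega
    have hfke : Even (f k) := by rw [hfk]; exact Even.zero
    have hne : f (k+1) ≠ f k := by
      rcases hcond with h | h
      · rw [Nat.odd_iff] at h; rw [Nat.even_iff] at hfke; omega
      · exact h
    have : f (k+1) ≤ f k := hmono hk1 (by omega)
    omega
  have hseteq : {j : ℕ | 1 ≤ j ∧ f j = f j₀} = ↑(F.filter (fun j => f j = f j₀)) := by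
    ext j
    simp only [Set.mem_setOf_eq, Finset.coe_filter, hF, Finset.mem_filter, Finset.mem_Icc,
      Set.mem_setOf_eq]
    constructor
    · rintro ⟨hj1, hj2⟩
      have hjk : j ≤ k := by
        by_contra hc
        push_neg at hc
        have h1 : f j ≤ f (k+1) := hmono (by omega) (by omega)
        have h2 : f (k+1) ≤ f k := hmono hk1 (by omega)
        have hveq : f j₀ = f k := by omega
        have hne : f (k+1) ≠ f k := by
          rcases hcond with h | h
          · rw [Nat.odd_iff] at h
            have : Even (f j₀) := hj0e
            rw [Nat.even_iff] at this
            omega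
          · exact h
        omega
      exact ⟨⟨⟨hj1, hjk⟩, hj2 ▸ hj0e⟩, hj2⟩
    · rintro ⟨⟨⟨hj1, _⟩, _⟩, hj2⟩
      exact ⟨hj1, hj2⟩
  have := horth (f j₀) hj0e hv1
  rw [hseteq, Set.ncard_coe_finset] at this
  exact this



lemma ite_odd17 (m : ℕ) : (if Odd m then 1 else 0) = m % 2 := by
  split_ifs with hc
  · rw [Nat.odd_iff] at hc; omega
  · rw [Nat.odd_iff] at hc; omega

lemma ite_even17 (m : ℕ) : (if Even m then 1 else 0) = 1 - m % 2 := by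
  split_ifs with hc
  · rw [Nat.even_iff] at hc; omega
  · rw [Nat.even_iff] at hc; omega

lemma spar17 {n : ℕ} (f : ℕ → ℕ) : ∀ k, k ≤ 2*n+1 →
    ((∑ j ∈ Finset.Icc 1 k, f j) + k
      + ((Finset.Icc 1 k).filter (fun j => Odd (f j + (2*n+1 - j)))).card + (k+1)/2) % 2 = 0 := by
  intro k
  induction k with
  | zero => intro _; simp
  | succ k ih =>
    intro hk
    have ih' := ih (by omega)
    have hOrec := filter_succ17 k (fun j => Odd (f j + (2*n+1 - j)))
    have hsum := sum_succ17 k f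
    rw [ite_odd17] at hOrec
    rw [hsum, hOrec]
    set sk := ∑ j ∈ Finset.Icc 1 k, f j with hsk
    set ck := ((Finset.Icc 1 k).filter (fun j => Odd (f j + (2*n+1 - j)))).card with hck
    omega

lemma inv17 {n : ℕ} {f : ℕ → ℕ}
    (hmono : ∀ ⦃j k : ℕ⦄, 1 ≤ j → j ≤ k → f k ≤ f j)
    (horth : ∀ i, Even i → 1 ≤ i → Even (Set.ncard {j : ℕ | 1 ≤ j ∧ f j = i})) :
    ∀ k, k ≤ 2*n+1 →
    (((Finset.Icc 1 k).filter (fun j => Odd (f j + (2*n+1 - j)))).card = (k+1)/2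
        ∧ ((Finset.Icc 1 k).filter (fun j => Even (f j))).card % 2 = 0)
    ∨ (((Finset.Icc 1 k).filter (fun j => Even (f j))).card % 2 = 1
        ∧ ((Finset.Icc 1 k).filter (fun j => Odd (f j + (2*n+1 - j)))).card = (k+1)/2 + 1
        ∧ k % 2 = 0)
    ∨ (((Finset.Icc 1 k).filter (fun j => Even (f j))).card % 2 = 1
        ∧ ((Finset.Icc 1 k).filter (fun j => Odd (f j + (2*n+1 - j)))).card + 1 = (k+1)/2
        ∧ k % 2 = 1) := by
  intro k
  induction k with
  | zero => intro _; left; simp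
  | succ k ih =>
    intro hk
    have ih' := ih (by omega)
    have hOrec := filter_succ17 k (fun j => Odd (f j + (2*n+1 - j)))
    have hWrec := filter_succ17 k (fun j => Even (f j))
    rw [ite_odd17] at hOrec
    rw [ite_even17] at hWrec
    have hstep : ((Finset.Icc 1 k).filter (fun j => Even (f j))).card % 2 = 1 →
        f (k+1) = f k ∧ f k % 2 = 0 := by
      intro hodd
      have hk1 : 1 ≤ k := by
        by_contra hc
        push_neg at hc
        interval_cases k
        simp at hodd
      by_contra hc
      have hcond : Odd (f k) ∨ f (k+1) ≠ f k := by
        rcases Nat.even_or_odd (f k) with he | ho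
        · right
          intro heq
          exact hc ⟨heq, Nat.even_iff.mp he⟩
        · left; exact ho
      have := runB17 hmono horth k hk1 hcond
      rw [Nat.even_iff] at this
      omega
    rw [hOrec, hWrec]
    rcases ih' with ⟨h1, h2⟩ | ⟨h1, h2, h3⟩ | ⟨h1, h2, h3⟩
    · omega
    · obtain ⟨hfeq, hfpar⟩ := hstep h1
      left
      omega
    · obtain ⟨hfeq, hfpar⟩ := hstep h1
      left
      omega



lemma wtot17 {n : ℕ} {f : ℕ → ℕ} (hstot : ∑ j ∈ Finset.Icc 1 (2*n+1), f j = 2*n+1) :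
    ((Finset.Icc 1 (2*n+1)).filter (fun j => Even (f j))).card % 2 = 0 := by
  have hodd : Odd (((Finset.Icc 1 (2*n+1)).filter (fun j => Odd (f j))).card) := by
    rw [← Finset.odd_sum_iff_odd_card_odd]
    rw [hstot]
    exact ⟨n, by omega⟩
  have hpart := count_partition17 (2*n+1) f
  rw [Nat.odd_iff] at hodd
  omega

lemma sumC17 {n : ℕ} {f z z' : ℕ → ℕ}
    (hEO : ∀ k, 1 ≤ k → k ≤ 2*n+1 → Odd (f k + (2*n+1 - k)) →
      f k + (2*n+1 - k)
        = 2 * z' (((Finset.Icc 1 k).filter (fun j => Odd (f j + (2*n+1 - j)))).card) + 1)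
    (hEE : ∀ k, 1 ≤ k → k ≤ 2*n+1 → Even (f k + (2*n+1 - k)) →
      f k + (2*n+1 - k)
        = 2 * z (((Finset.Icc 1 k).filter (fun j => Even (f j + (2*n+1 - j)))).card)) :
    ∀ k, k ≤ 2*n+1 →
      ∑ j ∈ Finset.Icc 1 k, (f j + (2*n+1 - j))
        = 2 * (∑ h ∈ Finset.Icc 1 (((Finset.Icc 1 k).filter (fun j => Odd (f j + (2*n+1 - j)))).card), z' h)
          + ((Finset.Icc 1 k).filter (fun j => Odd (f j + (2*n+1 - j)))).card
          + 2 * (∑ h ∈ Finset.Icc 1 (k - ((Finset.Icc 1 k).filter (fun j => Odd (f j + (2*n+1 - j)))).card), z h) := by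
  intro k
  induction k with
  | zero => intro _; simp
  | succ k ih =>
    intro hk
    have ih' := ih (by omega)
    have hOrec := filter_succ17 k (fun j => Odd (f j + (2*n+1 - j)))
    have hsum := sum_succ17 k (fun j => f j + (2*n+1 - j))
    have hcnt := count_partition17 k (fun j => f j + (2*n+1 - j))
    have hcnt1 := count_partition17 (k+1) (fun j => f j + (2*n+1 - j))
    rcases Nat.even_or_odd (f (k+1) + (2*n+1 - (k+1))) with hmu | hmu
    · -- even new term
      rw [if_neg (by rw [Nat.even_iff] at hmu; rw [Nat.odd_iff]; omega)] at hOrec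
      have hval := hEE (k+1) (by omega) hk hmu
      have hE1 : ((Finset.Icc 1 (k+1)).filter (fun j => Even (f j + (2*n+1 - j)))).card
          = (k - ((Finset.Icc 1 k).filter (fun j => Odd (f j + (2*n+1 - j)))).card) + 1 := by
        omega
      rw [hE1] at hval
      have hzrec := sum_succ17 (k - ((Finset.Icc 1 k).filter (fun j => Odd (f j + (2*n+1 - j)))).card) z
      rw [hsum, hOrec, hval]
      have hsub : k + 1 - ((Finset.Icc 1 k).filter (fun j => Odd (f j + (2*n+1 - j)))).card
          = (k - ((Finset.Icc 1 k).filter (fun j => Odd (f j + (2*n+1 - j)))).card) + 1 := by omega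
      simp only [Nat.add_zero]
      rw [hsub, hzrec]
      omega
    · -- odd new term
      rw [if_pos hmu] at hOrec
      have hval := hEO (k+1) (by omega) hk hmu
      rw [hOrec] at hval
      have hzrec := sum_succ17 (((Finset.Icc 1 k).filter (fun j => Odd (f j + (2*n+1 - j)))).card) z'
      rw [hsum, hOrec, hval]
      have hsub : k + 1 - (((Finset.Icc 1 k).filter (fun j => Odd (f j + (2*n+1 - j)))).card + 1)
          = k - ((Finset.Icc 1 k).filter (fun j => Odd (f j + (2*n+1 - j)))).card := by omega
      rw [hsub, hzrec]
      omega


/-- Computations in the proof of Lemma 1.4: the `2n+1` numbers `λ_j + (2n+1-j)`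
are pairwise distinct, `n` of them are even (`2z_1 > … > 2z_n`) and `n+1` odd
(`2z'_1+1 > … > 2z'_{n+1}+1`), and the partial sums satisfy formula (7). -/
theorem stmt17 (n : ℕ) (f : ℕ → ℕ)
    (hpart : IsPartition f (2*n+1)) (horth : Orth f)
    (z z' : ℕ → ℕ)
    (hz : ∀ h1 h2, 1 ≤ h1 → h1 < h2 → h2 ≤ n → z h2 < z h1)
    (hz' : ∀ h1 h2, 1 ≤ h1 → h1 < h2 → h2 ≤ n + 1 → z' h2 < z' h1)
    (hzv : ∀ h, 1 ≤ h → h ≤ n →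
      ∃ j, 1 ≤ j ∧ j ≤ 2*n+1 ∧ f j + (2*n+1 - j) = 2 * z h)
    (hz'v : ∀ h, 1 ≤ h → h ≤ n + 1 →
      ∃ j, 1 ≤ j ∧ j ≤ 2*n+1 ∧ f j + (2*n+1 - j) = 2 * z' h + 1) :
    (∀ j k, 1 ≤ j → j < k → k ≤ 2*n+1 →
      f j + (2*n+1 - j) ≠ f k + (2*n+1 - k)) ∧
    ((Finset.Icc 1 (2*n+1)).filter (fun j => Even (f j + (2*n+1 - j)))).card = n ∧
    ((Finset.Icc 1 (2*n+1)).filter (fun j => Odd (f j + (2*n+1 - j)))).card = n + 1 ∧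
    (∀ k, 1 ≤ k → k ≤ 2*n+1 →
      ∑ j ∈ Finset.Icc 1 k, (f j + (2*n+1 - j))
        = 2 * (∑ h ∈ Finset.Icc 1 ((k+1)/2), z' h) + (k+1)/2
          + (if Even (f k) ∧ Odd (S f k + k) then 1 else 0)
          + 2 * (∑ h ∈ Finset.Icc 1 (k/2), z h)) := by
  have hanti := mu_anti17 hpart
  obtain ⟨hcardE, hcardO⟩ := counts17 z z' hanti hz hz' hzv hz'v
  have hstot := stot17 hpart
  have horth' : ∀ i, Even i → 1 ≤ i → Even (Set.ncard {j : ℕ | 1 ≤ j ∧ f j = i}) := horth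
  have hEO : ∀ k, 1 ≤ k → k ≤ 2*n+1 → Odd (f k + (2*n+1 - k)) →
      f k + (2*n+1 - k)
        = 2 * z' (((Finset.Icc 1 k).filter (fun j => Odd (f j + (2*n+1 - j)))).card) + 1 := by
    have hψ : ∀ a b, 1 ≤ a → a < b → b ≤ n+1 → 2 * z' b + 1 < 2 * z' a + 1 := by
      intro a b ha hab hb
      have := hz' a b ha hab hb
      omega
    exact enum17 (μ := fun j => f j + (2*n+1 - j)) (ψ := fun h => 2 * z' h + 1)
      (M := 2*n+1) (m := n+1) (p := Odd) hanti hψ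
      (fun h h1 h2 => hz'v h h1 h2) (fun h _ _ => ⟨z' h, by ring⟩) hcardO
  have hEE : ∀ k, 1 ≤ k → k ≤ 2*n+1 → Even (f k + (2*n+1 - k)) →
      f k + (2*n+1 - k)
        = 2 * z (((Finset.Icc 1 k).filter (fun j => Even (f j + (2*n+1 - j)))).card) := by
    have hψ : ∀ a b, 1 ≤ a → a < b → b ≤ n → 2 * z b < 2 * z a := by
      intro a b ha hab hb
      have := hz a b ha hab hb
      omega
    exact enum17 (μ := fun j => f j + (2*n+1 - j)) (ψ := fun h => 2 * z h)
      (M := 2*n+1) (m := n) (p := Even) hanti hψ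
      (fun h h1 h2 => hzv h h1 h2) (fun h _ _ => ⟨z h, by ring⟩) hcardE
  have hsumC := sumC17 hEO hEE
  have hinv := inv17 (n := n) hpart.mono horth'
  have hwtot := wtot17 hstot
  have hpar := spar17 (n := n) f
  have hstep : ∀ k, 1 ≤ k →
      ((Finset.Icc 1 k).filter (fun j => Even (f j))).card % 2 = 1 →
      f (k+1) = f k ∧ f k % 2 = 0 := by
    intro k hk1 hodd
    by_contra hc
    have hcond : Odd (f k) ∨ f (k+1) ≠ f k := by
      rcases Nat.even_or_odd (f k) with he | ho
      · right
        intro heq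
        exact hc ⟨heq, Nat.even_iff.mp he⟩
      · left; exact ho
    have := runB17 hpart.mono horth' k hk1 hcond
    rw [Nat.even_iff] at this
    omega
  refine ⟨fun j k hj hjk hk => (hanti j k hj hjk hk).ne', hcardE, hcardO, ?_⟩
  intro k hk1 hk2
  have hS : S f k = ∑ j ∈ Finset.Icc 1 k, f j := rfl
  rw [hsumC k hk2]
  set O : ℕ := ((Finset.Icc 1 k).filter (fun j => Odd (f j + (2*n+1 - j)))).card with hO
  have hcnt : O + ((Finset.Icc 1 k).filter (fun j => Even (f j + (2*n+1 - j)))).card = k :=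
    count_partition17 k (fun j => f j + (2*n+1 - j))
  have hparm := hpar k hk2
  rw [hS.symm] at hparm
  rcases hinv k hk2 with ⟨h1, h2⟩ | ⟨h1, h2, h3⟩ | ⟨h1, h2, h3⟩
  · -- ν = 0 case
    rw [← hO] at h1 hparm
    rw [if_neg (by
      rintro ⟨hfe, hodd⟩
      rw [Nat.odd_iff] at hodd
      omega)]
    have e1 : k - O = k/2 := by omega
    rw [e1, h1]
    omega
  · -- case + : k even
    rw [← hO] at h2 hparm
    obtain ⟨hfeq, hfpar⟩ := hstep k hk1 h1
    rw [if_pos ⟨Nat.even_iff.mpr hfpar, by rw [Nat.odd_iff]; omega⟩]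
    have hk2' : k + 1 ≤ 2*n+1 := by omega
    have hmuk : Odd (f k + (2*n+1 - k)) := by rw [Nat.odd_iff]; omega
    have hvk := hEO k hk1 hk2 hmuk
    rw [← hO] at hvk
    have hmuk1 : Even (f (k+1) + (2*n+1 - (k+1))) := by rw [Nat.even_iff]; omega
    have hvk1 := hEE (k+1) (by omega) hk2' hmuk1
    have hOrec := filter_succ17 k (fun j => Odd (f j + (2*n+1 - j)))
    rw [if_neg (by rw [Nat.even_iff] at hmuk1; rw [Nat.odd_iff]; omega), ← hO] at hOrec
    have hcnt1 : ((Finset.Icc 1 (k+1)).filter (fun j => Odd (f j + (2*n+1 - j)))).card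
        + ((Finset.Icc 1 (k+1)).filter (fun j => Even (f j + (2*n+1 - j)))).card = k+1 :=
      count_partition17 (k+1) (fun j => f j + (2*n+1 - j))
    have hE1 : ((Finset.Icc 1 (k+1)).filter (fun j => Even (f j + (2*n+1 - j)))).card
        = k - O + 1 := by omega
    rw [hE1] at hvk1
    have hμeq : f (k+1) + (2*n+1 - (k+1)) = (f k + (2*n+1 - k)) - 1 := by omega
    have hkey : z' O = z (k - O + 1) := by omega
    have hs1 := sum_succ17 ((k+1)/2) z'
    have hs2 := sum_succ17 (k - O) z
    have e2 : k / 2 = (k - O) + 1 := by omega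
    rw [e2, hs2, h2] 
    rw [h2] at hkey
    rw [hs1]
    omega
  · -- case - : k odd
    rw [← hO] at h2 hparm
    have hklt : k + 1 ≤ 2*n+1 := by
      by_contra hc
      push_neg at hc
      have hke : k = 2*n+1 := by omega
      rw [hke] at h1
      omega
    obtain ⟨hfeq, hfpar⟩ := hstep k hk1 h1
    rw [if_pos ⟨Nat.even_iff.mpr hfpar, by rw [Nat.odd_iff]; omega⟩]
    have hmuk : Even (f k + (2*n+1 - k)) := by rw [Nat.even_iff]; omega
    have hvk := hEE k hk1 hk2 hmuk
    have hEk : ((Finset.Icc 1 k).filter (fun j => Even (f j + (2*n+1 - j)))).card = k - O := by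
      omega
    rw [hEk] at hvk
    have hmuk1 : Odd (f (k+1) + (2*n+1 - (k+1))) := by rw [Nat.odd_iff]; omega
    have hvk1 := hEO (k+1) (by omega) hklt hmuk1
    have hOrec := filter_succ17 k (fun j => Odd (f j + (2*n+1 - j)))
    rw [if_pos hmuk1, ← hO] at hOrec
    rw [hOrec] at hvk1
    have hμeq : f (k+1) + (2*n+1 - (k+1)) = (f k + (2*n+1 - k)) - 1 := by omega
    have hmge : 1 ≤ f k + (2*n+1 - k) := by omega
    have hkey : z (k - O) = z' (O + 1) + 1 := by omega
    have e1 : (k+1)/2 = O + 1 := by omega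
    have e2 : k/2 = O := by omega
    have e3 : k - O = O + 1 := by omega
    have hs1 := sum_succ17 O z'
    have hs2 := sum_succ17 O z
    rw [e1, e2, e3]
    rw [hs1, hs2]
    rw [e3] at hkey
    omega


end Wald
end
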